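/- arXiv:1803.07194 — 3 statements merged into one kernel-verified Lean document; each statement's English description precedes it below -/
import Mathlib

section
/- Kernel and nonnegativity of T^α_{2,k}: Let N ≥ 3 be an integer, α ≠ 0 and k ∈ {1,…,⌊(N−1)/2⌋}. Then: (a) ⟨T^α_{2,k}V, V⟩_{L²(G)} ≥ 0 for every V ∈ dom(T^α_{2,k}); and (b) the kernel of T^α_{2,k} is exactly the one-dimensional span of Φ_k^α, i.e., Φ_k^α ∈ dom(T^α_{2,k}) with T^α_{2,k}Φ_k^α = 0, and every V ∈ dom(T^α_{2,k}) with T^α_{2,k}V = 0 is a scalar multiple of Φ_k^α. -/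
open MeasureTheory Set Filter

noncomputable section

def mu : Measure ℝ := volume.restrict (Set.Ioi (0:ℝ))

def MemL2 (f : ℝ → ℂ) : Prop := MeasureTheory.MemLp f 2 mu

def MemH1 (f : ℝ → ℂ) : Prop :=
  ContinuousOn f (Set.Ici (0:ℝ)) ∧ (∀ x ∈ Set.Ioi (0:ℝ), DifferentiableAt ℝ f x) ∧
    MemL2 f ∧ MemL2 (deriv f)

def MemH2 (f : ℝ → ℂ) : Prop :=
  MemH1 f ∧ ContinuousOn (deriv f) (Set.Ici (0:ℝ)) ∧
    (∀ x ∈ Set.Ioi (0:ℝ), DifferentiableAt ℝ (deriv f) x) ∧ MemL2 (deriv (deriv f))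

def MemW1 (f : ℝ → ℂ) : Prop := MemH1 f ∧ MemL2 (fun x => (x : ℂ) * f x)

def MemW2 (f : ℝ → ℂ) : Prop := MemH2 f ∧ MemL2 (fun x => ((x : ℂ))^2 * f x)

def domDelta (N : ℕ) (α : ℝ) (V : Fin N → ℝ → ℂ) : Prop :=
  (∀ j, MemW2 (V j)) ∧ (∀ j j', V j 0 = V j' 0) ∧
    (∀ j₀, (∑ j, deriv (V j) 0) = (α : ℂ) * V j₀ 0)

def pot (N k : ℕ) (α c : ℝ) (j : Fin N) (x : ℝ) : ℝ :=
  if (j : ℕ) < k then (x - α/(2*(k:ℝ) - (N:ℝ)))^2 - c else (x + α/(2*(k:ℝ) - (N:ℝ)))^2 - c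

def Tlin (N k : ℕ) (α c : ℝ) (V : Fin N → ℝ → ℂ) (j : Fin N) (x : ℝ) : ℂ :=
  -(deriv (deriv (V j)) x) + (pot N k α c j x : ℂ) * V j x

def qf (N k : ℕ) (α c : ℝ) (V : Fin N → ℝ → ℂ) : ℝ :=
  (∑ j, ∫ x in Set.Ioi (0:ℝ), Tlin N k α c V j x * (starRingEnd ℂ) (V j x)).re

def memL2k (N k : ℕ) (V : Fin N → ℝ → ℂ) : Prop :=
  ∀ j j' : Fin N, (((j:ℕ) < k ∧ (j':ℕ) < k) ∨ (k ≤ (j:ℕ) ∧ k ≤ (j':ℕ))) → V j =ᵐ[mu] V j'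

def phiProf (N k : ℕ) (α ω : ℝ) (j : Fin N) (x : ℝ) : ℝ :=
  if (j : ℕ) < k then Real.exp ((ω+1)/2) * Real.exp (-(x - α/(2*(k:ℝ) - (N:ℝ)))^2/2)
  else Real.exp ((ω+1)/2) * Real.exp (-(x + α/(2*(k:ℝ) - (N:ℝ)))^2/2)



lemma L2mul {f g : ℝ → ℂ} (hf : MemL2 f) (hg : MemL2 g) :
    MeasureTheory.Integrable (fun x => f x * g x) mu := by
  have h := hf.smul (r := 1) hg (hpqr := ENNReal.holderConjugate_iff.2 ENNReal.inv_two_add_inv_two)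
  rw [MeasureTheory.memLp_one_iff_integrable] at h
  have h2 : (g • f) = fun x => f x * g x := by
    funext x; simp [Pi.smul_apply, smul_eq_mul, mul_comm]
  rwa [h2] at h

lemma L2conj {f : ℝ → ℂ} (hf : MemL2 f) : MemL2 (fun x => (starRingEnd ℂ) (f x)) := by
  have meas : MeasureTheory.AEStronglyMeasurable (fun x => (starRingEnd ℂ) (f x)) mu :=
    RCLike.continuous_conj.comp_aestronglyMeasurable hf.1
  exact MeasureTheory.MemLp.of_le hf meas (Filter.Eventually.of_forall fun x => by simp)

lemma L2_x_mul {f : ℝ → ℂ} (hf : MemL2 f) (hf2 : MemL2 (fun x => ((x:ℂ))^2 * f x)) :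
    MemL2 (fun x => (x:ℂ) * f x) := by
  have meas : MeasureTheory.AEStronglyMeasurable (fun x : ℝ => (x:ℂ) * f x) mu :=
    ((Complex.continuous_ofReal.aestronglyMeasurable :
      MeasureTheory.AEStronglyMeasurable (fun x : ℝ => (x:ℂ)) mu)).mul hf.1
  have hsum : MeasureTheory.MemLp (fun x => ‖f x‖ + ‖((x:ℂ))^2 * f x‖) 2 mu :=
    hf.norm.add hf2.norm
  refine hsum.of_le meas (Filter.Eventually.of_forall fun x => ?_)
  refine le_trans ?_ (le_abs_self _)
  simp only [norm_mul, norm_pow]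
  nlinarith [sq_nonneg (‖(x:ℂ)‖ - 1), norm_nonneg (f x), norm_nonneg ((x:ℂ))]

lemma limit_eq_zero_of_integrable {F : ℝ → ℝ} {L : ℝ}
    (hFi : MeasureTheory.Integrable F mu) (h : Filter.Tendsto F Filter.atTop (nhds L)) :
    L = 0 := by
  by_contra hL
  have hpos : 0 < |L| / 2 := by positivity
  have hev : ∀ᶠ x in Filter.atTop, |L| / 2 ≤ |F x| := by
    have habs : Filter.Tendsto (fun x => |F x|) Filter.atTop (nhds |L|) := h.abs
    have : ∀ᶠ x in Filter.atTop, |L| / 2 < |F x| :=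
      habs.eventually_const_lt (by linarith [abs_nonneg L])
    exact this.mono fun x hx => le_of_lt hx
  obtain ⟨M, hM⟩ := Filter.eventually_atTop.1 hev
  set M' : ℝ := max M 0 with hM'
  have hsub : Set.Ioi M' ⊆ Set.Ioi (0:ℝ) := fun x hx => lt_of_le_of_lt (le_max_right M 0) hx
  have hFi0 : MeasureTheory.IntegrableOn F (Set.Ioi (0:ℝ)) MeasureTheory.volume := by
    rw [MeasureTheory.IntegrableOn]; exact hFi
  have hFi' : MeasureTheory.IntegrableOn F (Set.Ioi M') := hFi0.mono_set hsub
  have hconst : MeasureTheory.Integrable (fun _ : ℝ => |L| / 2)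
      (MeasureTheory.volume.restrict (Set.Ioi M')) := by
    refine MeasureTheory.Integrable.mono' hFi'.norm MeasureTheory.aestronglyMeasurable_const ?_
    rw [MeasureTheory.ae_restrict_iff' measurableSet_Ioi]
    refine Filter.Eventually.of_forall fun x hx => ?_
    rw [Real.norm_eq_abs, abs_of_nonneg (le_of_lt hpos)]
    exact le_trans (hM x (le_of_lt (lt_of_le_of_lt (le_max_left M 0) hx))) (le_of_eq (Real.norm_eq_abs _).symm)
  rw [MeasureTheory.integrable_const_iff] at hconst
  rcases hconst with h0 | hfin
  · exact hL (by simpa using (abs_eq_zero.1 (by linarith [abs_nonneg L, (by linarith : |L|/2 = 0)])))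
  · have hfin := MeasureTheory.measure_lt_top (MeasureTheory.volume.restrict (Set.Ioi M')) Set.univ
    rw [MeasureTheory.Measure.restrict_apply_univ, Real.volume_Ioi] at hfin
    exact (lt_irrefl _ hfin).elim

lemma integral_deriv_Ioi {F G : ℝ → ℝ} (hFc : ContinuousOn F (Set.Ici (0:ℝ)))
    (hFd : ∀ x ∈ Set.Ioi (0:ℝ), HasDerivAt F (G x) x)
    (hGi : MeasureTheory.Integrable G mu) (hFi : MeasureTheory.Integrable F mu) :
    ∫ x in Set.Ioi (0:ℝ), G x = - F 0 := by
  have hGIoi : MeasureTheory.IntegrableOn G (Set.Ioi (0:ℝ)) := by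
    rw [MeasureTheory.IntegrableOn]; exact hGi
  have key : ∀ T : ℝ, 0 ≤ T → ∫ x in (0:ℝ)..T, G x = F T - F 0 := by
    intro T hT
    rcases eq_or_lt_of_le hT with rfl | hT'
    · simp
    · refine intervalIntegral.integral_eq_sub_of_hasDerivAt_of_le hT
        (hFc.mono ?_) (fun x hx => hFd x hx.1) ?_
      · intro x hx
        exact hx.1
      · rw [intervalIntegrable_iff_integrableOn_Ioc_of_le hT]
        exact hGIoi.mono_set Set.Ioc_subset_Ioi_self
  have tendA : Filter.Tendsto (fun T => ∫ x in (0:ℝ)..T, G x) Filter.atTop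
      (nhds (∫ x in Set.Ioi (0:ℝ), G x)) :=
    MeasureTheory.intervalIntegral_tendsto_integral_Ioi 0 hGIoi Filter.tendsto_id
  have tendF : Filter.Tendsto F Filter.atTop (nhds (F 0 + ∫ x in Set.Ioi (0:ℝ), G x)) := by
    have hev : (fun T => F 0 + ∫ x in (0:ℝ)..T, G x) =ᶠ[Filter.atTop] F := by
      refine (Filter.eventually_ge_atTop (0:ℝ)).mono fun T hT => ?_
      show F 0 + ∫ x in (0:ℝ)..T, G x = F T
      rw [key T hT]; ring
    exact Filter.Tendsto.congr' hev (tendsto_const_nhds.add tendA)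
  have := limit_eq_zero_of_integrable hFi tendF
  linarith

lemma mu_def : mu = MeasureTheory.volume.restrict (Set.Ioi (0:ℝ)) := rfl

lemma edge_core {v : ℝ → ℂ} (hv : MemW2 v) (s : ℝ) :
    MeasureTheory.Integrable
      (fun x : ℝ => (-(deriv (deriv v) x) + ((((x+s)^2 - 1 : ℝ)) : ℂ) * v x) * (starRingEnd ℂ) (v x)) mu ∧
    MeasureTheory.Integrable (fun x : ℝ => ‖deriv v x + (((x+s : ℝ)) : ℂ) * v x‖^2) mu ∧
    (∫ x in Set.Ioi (0:ℝ),
        (-(deriv (deriv v) x) + ((((x+s)^2 - 1 : ℝ)) : ℂ) * v x) * (starRingEnd ℂ) (v x)).re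
      = (∫ x in Set.Ioi (0:ℝ), ‖deriv v x + (((x+s : ℝ)) : ℂ) * v x‖^2)
        + ((deriv v 0 + ((((0:ℝ)+s : ℝ)) : ℂ) * v 0) * (starRingEnd ℂ) (v 0)).re := by
  obtain ⟨⟨⟨hcont, hdiff, hvL2, hv'L2⟩, hcont', hdiff', hv''L2⟩, hx2⟩ := hv
  set w : ℝ → ℂ := fun x => deriv v x + (((x+s : ℝ)) : ℂ) * v x with hw
  have hbv : MemL2 (fun x : ℝ => (((x+s : ℝ)) : ℂ) * v x) := by
    have h1 : (fun x : ℝ => (((x+s:ℝ)) : ℂ) * v x)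
        = fun x : ℝ => (x:ℂ) * v x + ((s:ℂ)) * v x := by
      funext x; push_cast; ring
    rw [h1]
    exact (L2_x_mul hvL2 hx2).add (hvL2.const_mul _)
  have hwL2 : MemL2 w := hv'L2.add hbv
  have hpotv : MemL2 (fun x : ℝ => ((((x+s)^2 - 1 : ℝ)) : ℂ) * v x) := by
    have h1 : (fun x : ℝ => ((((x+s)^2 - 1 : ℝ)) : ℂ) * v x)
        = fun x : ℝ => ((x:ℂ))^2 * v x + ((2*s:ℂ)) * ((x:ℂ) * v x) + ((s^2-1 : ℂ)) * v x := by
      funext x; push_cast; ring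
    rw [h1]
    exact ((hx2.add ((L2_x_mul hvL2 hx2).const_mul _)).add (hvL2.const_mul _))
  have hconjv : MemL2 (fun x => (starRingEnd ℂ) (v x)) := L2conj hvL2
  have hTint : MeasureTheory.Integrable (fun x : ℝ =>
      (-(deriv (deriv v) x) + ((((x+s)^2 - 1 : ℝ)) : ℂ) * v x) * (starRingEnd ℂ) (v x)) mu := by
    have h1 : (fun x : ℝ =>
        (-(deriv (deriv v) x) + ((((x+s)^2 - 1 : ℝ)) : ℂ) * v x) * (starRingEnd ℂ) (v x))
        = fun x : ℝ => -(deriv (deriv v) x * (starRingEnd ℂ) (v x))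
            + (((((x+s)^2 - 1 : ℝ)) : ℂ) * v x) * (starRingEnd ℂ) (v x) := by
      funext x; ring
    rw [h1]
    exact ((L2mul hv''L2 hconjv).neg).add (L2mul hpotv hconjv)
  have hwsq : MeasureTheory.Integrable (fun x => ‖w x‖^2) mu :=
    (MeasureTheory.memLp_two_iff_integrable_sq_norm hwL2.1).1 hwL2
  refine ⟨hTint, hwsq, ?_⟩
  set F : ℝ → ℝ := fun x => ((w x) * (starRingEnd ℂ) (v x)).re with hF
  set G : ℝ → ℝ := fun x => ‖w x‖^2
    - ((-(deriv (deriv v) x) + ((((x+s)^2 - 1 : ℝ)) : ℂ) * v x) * (starRingEnd ℂ) (v x)).re with hG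
  have hFint : MeasureTheory.Integrable F mu := by
    have := (L2mul hwL2 hconjv).re
    simpa [hF] using this
  have hreTint : MeasureTheory.Integrable (fun x =>
      ((-(deriv (deriv v) x) + ((((x+s)^2 - 1 : ℝ)) : ℂ) * v x) * (starRingEnd ℂ) (v x)).re) mu := by
    have := hTint.re
    simpa using this
  have hGint : MeasureTheory.Integrable G mu := hwsq.sub hreTint
  have hFcont : ContinuousOn F (Set.Ici (0:ℝ)) := by
    apply Complex.continuous_re.comp_continuousOn
    apply ContinuousOn.mul
    · apply ContinuousOn.add hcont'
      exact (Complex.continuous_ofReal.comp (continuous_id.add continuous_const)).continuousOn.mul hcont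
    · exact RCLike.continuous_conj.comp_continuousOn hcont
  have hFd : ∀ x ∈ Set.Ioi (0:ℝ), HasDerivAt F (G x) x := by
    intro x hx
    have hdv : HasDerivAt v (deriv v x) x := (hdiff x hx).hasDerivAt
    have hdv' : HasDerivAt (deriv v) (deriv (deriv v) x) x := (hdiff' x hx).hasDerivAt
    have hb : HasDerivAt (fun y : ℝ => (((y+s : ℝ)) : ℂ)) 1 x := by
      have h := ((hasDerivAt_id x).add_const s).ofReal_comp
      simpa using h
    have hbw : HasDerivAt (fun y : ℝ => (((y+s:ℝ)):ℂ) * v y)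
        (1 * v x + (((x+s:ℝ)):ℂ) * deriv v x) x := hb.mul hdv
    have hwd : HasDerivAt w (deriv (deriv v) x + (1 * v x + (((x+s:ℝ)):ℂ) * deriv v x)) x :=
      hdv'.add hbw
    have hconj : HasDerivAt (fun y => (starRingEnd ℂ) (v y)) ((starRingEnd ℂ) (deriv v x)) x := by
      simpa [Complex.star_def] using hdv.star
    have hprod : HasDerivAt (fun y => w y * (starRingEnd ℂ) (v y))
        ((deriv (deriv v) x + (1 * v x + (((x+s:ℝ)):ℂ) * deriv v x)) * (starRingEnd ℂ) (v x)
          + w x * (starRingEnd ℂ) (deriv v x)) x := hwd.mul hconj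
    have hre : HasDerivAt F
        (((deriv (deriv v) x + (1 * v x + (((x+s:ℝ)):ℂ) * deriv v x)) * (starRingEnd ℂ) (v x)
          + w x * (starRingEnd ℂ) (deriv v x)).re) x :=
      Complex.reCLM.hasFDerivAt.comp_hasDerivAt x hprod
    have hD : (deriv (deriv v) x + (1 * v x + (((x+s:ℝ)):ℂ) * deriv v x)) * (starRingEnd ℂ) (v x)
          + w x * (starRingEnd ℂ) (deriv v x)
        = w x * (starRingEnd ℂ) (w x)
          - (-(deriv (deriv v) x) + ((((x+s)^2 - 1 : ℝ)) : ℂ) * v x) * (starRingEnd ℂ) (v x) := by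
      simp only [hw, map_add, map_mul, Complex.conj_ofReal]
      push_cast
      ring
    have hGx : G x = ((deriv (deriv v) x + (1 * v x + (((x+s:ℝ)):ℂ) * deriv v x)) * (starRingEnd ℂ) (v x)
          + w x * (starRingEnd ℂ) (deriv v x)).re := by
      rw [hD, Complex.sub_re, hG]
      congr 1
      rw [Complex.mul_conj]
      simp [Complex.normSq_eq_norm_sq, ← Complex.ofReal_pow]
    rw [hGx]
    exact hre
  have hint := integral_deriv_Ioi hFcont hFd hGint hFint
  have hsplit : ∫ x in Set.Ioi (0:ℝ), G x
      = (∫ x in Set.Ioi (0:ℝ), ‖w x‖^2)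
        - ∫ x in Set.Ioi (0:ℝ),
            ((-(deriv (deriv v) x) + ((((x+s)^2 - 1 : ℝ)) : ℂ) * v x) * (starRingEnd ℂ) (v x)).re := by
    rw [hG, ← mu_def]
    exact MeasureTheory.integral_sub hwsq hreTint
  have hre2 : (∫ x in Set.Ioi (0:ℝ),
        (-(deriv (deriv v) x) + ((((x+s)^2 - 1 : ℝ)) : ℂ) * v x) * (starRingEnd ℂ) (v x)).re
      = ∫ x in Set.Ioi (0:ℝ),
          ((-(deriv (deriv v) x) + ((((x+s)^2 - 1 : ℝ)) : ℂ) * v x) * (starRingEnd ℂ) (v x)).re := by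
    rw [← mu_def]
    have := _root_.integral_re hTint
    simpa using this.symm
  rw [hre2]
  rw [← mu_def] at hint hsplit ⊢
  have hF0 : F 0 = ((deriv v 0 + ((((0:ℝ)+s : ℝ)) : ℂ) * v 0) * (starRingEnd ℂ) (v 0)).re := rfl
  linarith [hint, hsplit]

lemma memL2_gauss {q : ℝ → ℝ} (hq : Continuous q) (s K : ℝ)
    (hbd : ∀ x, |q x| ≤ K * (1 + x^2)) :
    MemL2 (fun x => ((q x * Real.exp (-(x+s)^2/2) : ℝ) : ℂ)) := by
  have hK : 0 ≤ K := by
    have h0 := hbd 0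
    have h1 := abs_nonneg (q 0)
    nlinarith
  have hgmem : MeasureTheory.MemLp
      (fun x : ℝ => 8 * K * Real.exp (s^2/2) * Real.exp (-(1/8) * x^2)) 2 mu := by
    have hcont : Continuous fun x : ℝ => 8*K*Real.exp (s^2/2) * Real.exp (-(1/8)*x^2) := by
      continuity
    rw [MeasureTheory.memLp_two_iff_integrable_sq hcont.aestronglyMeasurable]
    have hint : MeasureTheory.Integrable
        (fun x : ℝ => (8*K*Real.exp (s^2/2))^2 * Real.exp (-(1/4) * x^2)) :=
      (integrable_exp_neg_mul_sq (by norm_num : (0:ℝ) < 1/4)).const_mul _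
    have heq : (fun x : ℝ => (8*K*Real.exp (s^2/2) * Real.exp (-(1/8)*x^2))^2)
        = fun x : ℝ => (8*K*Real.exp (s^2/2))^2 * Real.exp (-(1/4) * x^2) := by
      funext x
      rw [mul_pow]
      congr 1
      rw [pow_two, ← Real.exp_add]
      congr 1
      ring
    rw [heq, mu_def]
    exact hint.restrict
  have meas : MeasureTheory.AEStronglyMeasurable
      (fun x : ℝ => ((q x * Real.exp (-(x+s)^2/2) : ℝ) : ℂ)) mu := by
    apply Continuous.aestronglyMeasurable
    exact Complex.continuous_ofReal.comp (hq.mul (by continuity))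
  refine hgmem.of_le meas (Filter.Eventually.of_forall fun x => ?_)
  have hE1 : Real.exp (-(x+s)^2/2) ≤ Real.exp (s^2/2) * Real.exp (-(1/4) * x^2) := by
    rw [← Real.exp_add]
    apply Real.exp_le_exp.2
    nlinarith [sq_nonneg (x + 2*s)]
  have hE2 : (1 + x^2) ≤ 8 * Real.exp ((1/8) * x^2) := by
    have := Real.add_one_le_exp ((1/8) * x^2)
    nlinarith
  have hEpos : 0 < Real.exp (-(x+s)^2/2) := Real.exp_pos _
  have hnorm : ‖((q x * Real.exp (-(x+s)^2/2) : ℝ) : ℂ)‖ = |q x| * Real.exp (-(x+s)^2/2) := by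
    rw [Complex.norm_real, Real.norm_eq_abs, abs_mul, abs_of_pos hEpos]
  rw [hnorm]
  have step1 : |q x| * Real.exp (-(x+s)^2/2)
      ≤ (K*(1+x^2)) * (Real.exp (s^2/2) * Real.exp (-(1/4)*x^2)) :=
    mul_le_mul (hbd x) hE1 (le_of_lt hEpos) (by nlinarith [sq_nonneg x])
  have step2 : (K*(1+x^2)) * (Real.exp (s^2/2) * Real.exp (-(1/4)*x^2))
      ≤ (K * (8 * Real.exp ((1/8)*x^2))) * (Real.exp (s^2/2) * Real.exp (-(1/4)*x^2)) := by
    apply mul_le_mul_of_nonneg_right _ (by positivity)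
    exact mul_le_mul_of_nonneg_left hE2 hK
  have hcomb : Real.exp ((1/8)*x^2) * Real.exp (-(1/4)*x^2) = Real.exp (-(1/8)*x^2) := by
    rw [← Real.exp_add]; congr 1; ring
  have step3 : (K * (8 * Real.exp ((1/8)*x^2))) * (Real.exp (s^2/2) * Real.exp (-(1/4)*x^2))
      = 8*K*Real.exp (s^2/2) * Real.exp (-(1/8) * x^2) := by
    rw [← hcomb]; ring
  have hgnorm : ‖(8*K*Real.exp (s^2/2) * Real.exp (-(1/8) * x^2))‖
      = 8*K*Real.exp (s^2/2) * Real.exp (-(1/8) * x^2) := by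
    rw [Real.norm_eq_abs, abs_of_nonneg (by positivity)]
  rw [hgnorm]
  linarith [step1, step2, le_of_eq step3]

lemma gauss_hasDerivAt (s : ℝ) (x : ℝ) :
    HasDerivAt (fun y : ℝ => Real.exp (-(y+s)^2/2)) (-(x+s) * Real.exp (-(x+s)^2/2)) x := by
  have h1 : HasDerivAt (fun y : ℝ => -(y+s)^2/2) (-(x+s)) x := by
    have h2 := (((hasDerivAt_id x).add_const s).pow 2).neg.div_const 2
    exact h2.congr_deriv (by simp only [id_eq]; ring)
  simpa [mul_comm] using h1.exp

lemma abs_le_one_add_sq (x : ℝ) : |x| ≤ 1 + x^2 := by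
  nlinarith [sq_nonneg (|x|-1), sq_abs x, abs_nonneg x]

lemma gaussC_deriv (C s : ℝ) :
    deriv (fun x : ℝ => ((C * Real.exp (-(x+s)^2/2) : ℝ) : ℂ))
      = fun x : ℝ => (((-(x+s) * (C * Real.exp (-(x+s)^2/2)) : ℝ)) : ℂ) := by
  funext x
  have h := (((gauss_hasDerivAt s x).const_mul C)).ofReal_comp
  rw [h.deriv]
  norm_cast
  ring

lemma gauss2_hasDerivAt (C s x : ℝ) :
    HasDerivAt (fun y : ℝ => (((-(y+s) * (C * Real.exp (-(y+s)^2/2)) : ℝ)) : ℂ))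
      (((((x+s)^2 - 1) * (C * Real.exp (-(x+s)^2/2)) : ℝ) : ℂ)) x := by
  have ha : HasDerivAt (fun y : ℝ => -(y+s)) (-1) x := ((hasDerivAt_id x).add_const s).neg
  have h1 := (ha.mul ((gauss_hasDerivAt s x).const_mul C)).ofReal_comp
  convert h1 using 2
  · rfl
  · ring

lemma gaussC_deriv2 (C s : ℝ) :
    deriv (deriv (fun x : ℝ => ((C * Real.exp (-(x+s)^2/2) : ℝ) : ℂ)))
      = fun x : ℝ => (((((x+s)^2 - 1) * (C * Real.exp (-(x+s)^2/2)) : ℝ)) : ℂ) := by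
  rw [gaussC_deriv]
  funext x
  exact (gauss2_hasDerivAt C s x).deriv

lemma memW2_gauss (C s : ℝ) : MemW2 (fun x : ℝ => ((C * Real.exp (-(x+s)^2/2) : ℝ) : ℂ)) := by
  have hexp : Continuous fun x : ℝ => Real.exp (-(x+s)^2/2) :=
    Real.continuous_exp.comp (((continuous_id.add continuous_const).pow 2).neg.div_const 2)
  have hcontf : Continuous (fun x : ℝ => ((C * Real.exp (-(x+s)^2/2) : ℝ) : ℂ)) :=
    Complex.continuous_ofReal.comp (continuous_const.mul hexp)
  have hL2v : MemL2 (fun x : ℝ => ((C * Real.exp (-(x+s)^2/2) : ℝ) : ℂ)) := by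
    apply memL2_gauss (q := fun _ => C) continuous_const s |C|
    intro x
    have := abs_nonneg C
    nlinarith [sq_nonneg x]
  have hL2v' : MemL2 (deriv (fun x : ℝ => ((C * Real.exp (-(x+s)^2/2) : ℝ) : ℂ))) := by
    rw [gaussC_deriv]
    have heq : (fun x : ℝ => (((-(x+s) * (C * Real.exp (-(x+s)^2/2)) : ℝ)) : ℂ))
        = fun x : ℝ => (((-(x+s) * C) * Real.exp (-(x+s)^2/2) : ℝ) : ℂ) := by
      funext x; norm_cast; ring
    rw [heq]
    apply memL2_gauss (q := fun x => -(x+s) * C) ((continuous_id.add continuous_const).neg.mul continuous_const) s (|C| * (1 + |s|))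
    intro x
    have h1 : |(-(x+s)*C)| = |x+s| * |C| := by rw [abs_mul, abs_neg]
    have h2 : |x+s| ≤ |x| + |s| := abs_add_le x s
    have h3 := abs_le_one_add_sq x
    rw [h1]
    nlinarith [abs_nonneg C, abs_nonneg s, sq_nonneg x, abs_nonneg x,
      mul_le_mul_of_nonneg_right h2 (abs_nonneg C),
      mul_nonneg (abs_nonneg s) (sq_nonneg x), mul_nonneg (abs_nonneg C) (abs_nonneg s)]
  have hL2v'' : MemL2 (deriv (deriv (fun x : ℝ => ((C * Real.exp (-(x+s)^2/2) : ℝ) : ℂ)))) := by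
    rw [gaussC_deriv2]
    have heq : (fun x : ℝ => (((((x+s)^2 - 1) * (C * Real.exp (-(x+s)^2/2)) : ℝ)) : ℂ))
        = fun x : ℝ => (((((x+s)^2 - 1) * C) * Real.exp (-(x+s)^2/2) : ℝ) : ℂ) := by
      funext x; norm_cast; ring
    rw [heq]
    apply memL2_gauss (q := fun x => ((x+s)^2 - 1) * C) ((((continuous_id.add continuous_const).pow 2).sub continuous_const).mul continuous_const) s (|C| * (2 + s^2 + 2*|s|))
    intro x
    have h1 : |((x+s)^2 - 1) * C| ≤ ((x+s)^2 + 1) * |C| := by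
      rw [abs_mul]
      apply mul_le_mul_of_nonneg_right _ (abs_nonneg C)
      calc |(x+s)^2 - 1| ≤ |(x+s)^2| + 1 := by
            have := abs_sub_abs_le_abs_sub ((x+s)^2) 1
            have := abs_sub ((x+s)^2) 1
            calc |(x+s)^2 - 1| ≤ |(x+s)^2| + |(1:ℝ)| := abs_sub _ _
              _ = |(x+s)^2| + 1 := by norm_num
        _ = (x+s)^2 + 1 := by rw [abs_of_nonneg (sq_nonneg _)]
    have h3 := abs_le_one_add_sq x
    have h4 : (x+s)^2 + 1 ≤ (2 + s^2 + 2*|s|) * (1 + x^2) := by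
      have hxs : x * s ≤ |x| * |s| := le_trans (le_abs_self _) (le_of_eq (abs_mul x s))
      nlinarith [abs_nonneg s, abs_nonneg x, sq_nonneg x, sq_abs x,
        mul_nonneg (abs_nonneg s) (sq_nonneg x),
        mul_le_mul_of_nonneg_right h3 (abs_nonneg s)]
    calc |((x+s)^2 - 1) * C| ≤ ((x+s)^2 + 1) * |C| := h1
      _ ≤ ((2 + s^2 + 2*|s|) * (1 + x^2)) * |C| :=
          mul_le_mul_of_nonneg_right h4 (abs_nonneg C)
      _ = |C| * (2 + s^2 + 2*|s|) * (1 + x^2) := by ring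
  have hL2x2 : MemL2 (fun x : ℝ => ((x:ℂ))^2 * ((C * Real.exp (-(x+s)^2/2) : ℝ) : ℂ)) := by
    have heq : (fun x : ℝ => ((x:ℂ))^2 * ((C * Real.exp (-(x+s)^2/2) : ℝ) : ℂ))
        = fun x : ℝ => (((x^2 * C) * Real.exp (-(x+s)^2/2) : ℝ) : ℂ) := by
      funext x; push_cast; ring
    rw [heq]
    apply memL2_gauss (q := fun x => x^2 * C) ((continuous_pow 2).mul continuous_const) s |C|
    intro x
    have h1 : |x^2 * C| = x^2 * |C| := by rw [abs_mul, abs_of_nonneg (sq_nonneg x)]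
    rw [h1]
    nlinarith [abs_nonneg C, sq_nonneg x]
  have hdiff1 : ∀ x ∈ Set.Ioi (0:ℝ),
      DifferentiableAt ℝ (fun x : ℝ => ((C * Real.exp (-(x+s)^2/2) : ℝ) : ℂ)) x :=
    fun x _ => (((gauss_hasDerivAt s x).const_mul C).ofReal_comp).differentiableAt
  have hcont2 : ContinuousOn (deriv (fun x : ℝ => ((C * Real.exp (-(x+s)^2/2) : ℝ) : ℂ)))
      (Set.Ici (0:ℝ)) := by
    rw [gaussC_deriv]
    refine (Complex.continuous_ofReal.comp ?_).continuousOn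
    exact (continuous_id.add continuous_const).neg.mul
      (continuous_const.mul (Real.continuous_exp.comp
        (((continuous_id.add continuous_const).pow 2).neg.div_const 2)))
  have hdiff2 : ∀ x ∈ Set.Ioi (0:ℝ),
      DifferentiableAt ℝ (deriv (fun x : ℝ => ((C * Real.exp (-(x+s)^2/2) : ℝ) : ℂ))) x := by
    intro x _
    rw [gaussC_deriv]
    exact (gauss2_hasDerivAt C s x).differentiableAt
  exact ⟨⟨⟨hcontf.continuousOn, hdiff1, hL2v, hL2v'⟩, hcont2, hdiff2, hL2v''⟩, hL2x2⟩

lemma eq_zero_on_Ioi_of_ae_zero {f : ℝ → ℂ} (hc : ∀ x ∈ Set.Ioi (0:ℝ), ContinuousAt f x)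
    (h : f =ᵐ[mu] 0) : ∀ x ∈ Set.Ioi (0:ℝ), f x = 0 := by
  intro x hx
  by_contra hne
  have hev : ∀ᶠ y in nhds x, f y ≠ 0 := (hc x hx).eventually_ne hne
  obtain ⟨δ, hδ, hball⟩ := Metric.eventually_nhds_iff.1 hev
  set δ' : ℝ := min δ x with hδ'
  have hδ'pos : 0 < δ' := lt_min hδ hx
  have hsub : Metric.ball x δ' ⊆ {y | f y ≠ 0} := fun y hy =>
    hball (lt_of_lt_of_le (Metric.mem_ball.1 hy) (min_le_left _ _))
  have hsubIoi : Metric.ball x δ' ⊆ Set.Ioi (0:ℝ) := by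
    intro y hy
    have := Metric.mem_ball.1 hy
    rw [Real.dist_eq] at this
    have h2 : |y - x| < x := lt_of_lt_of_le this (min_le_right _ _)
    have := abs_lt.1 h2
    simpa using by linarith [this.1]
  have hnull : mu {y | f y ≠ 0} = 0 := by
    have := h
    rw [Filter.EventuallyEq, MeasureTheory.ae_iff] at this
    simpa using this
  have hballnull : mu (Metric.ball x δ') = 0 :=
    le_antisymm (le_trans (MeasureTheory.measure_mono hsub) (le_of_eq hnull)) zero_le
  have hballpos : 0 < mu (Metric.ball x δ') := by
    rw [mu_def, MeasureTheory.Measure.restrict_apply' measurableSet_Ioi,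
      Set.inter_eq_left.2 hsubIoi]
    rw [Real.volume_ball]
    simp only [ENNReal.ofReal_pos]
    linarith
  rw [hballnull] at hballpos
  exact lt_irrefl _ hballpos


/-- nonnegativity of `T^α_{2,k}` and `ker T^α_{2,k} = span{Φ_k^α}`. -/
theorem T2_nonneg_and_kernel
    (N k : ℕ) (hN : 3 ≤ N) (α ω : ℝ) (hα : α ≠ 0) (hk1 : 1 ≤ k) (hk2 : k ≤ (N - 1) / 2) :
    (∀ V : Fin N → ℝ → ℂ, domDelta N α V → 0 ≤ qf N k α 1 V) ∧
    (domDelta N α (fun j x => (phiProf N k α ω j x : ℂ)) ∧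
      (∀ j : Fin N, ∀ x ∈ Set.Ioi (0:ℝ),
        Tlin N k α 1 (fun j x => (phiProf N k α ω j x : ℂ)) j x = 0)) ∧
    (∀ V : Fin N → ℝ → ℂ, domDelta N α V →
      (∀ j : Fin N, ∀ x ∈ Set.Ioi (0:ℝ), Tlin N k α 1 V j x = 0) →
      ∃ c : ℂ, ∀ j : Fin N, ∀ x ∈ Set.Ioi (0:ℝ), V j x = c * (phiProf N k α ω j x : ℂ)) := by
  have hkN : 2*k < N := by omega
  have hkN' : k ≤ N := by omega
  set a : ℝ := α/(2*(k:ℝ) - (N:ℝ)) with ha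
  have hden : 2*(k:ℝ) - (N:ℝ) < 0 := by
    have h1 : ((2*k : ℕ) : ℝ) < ((N:ℕ) : ℝ) := Nat.cast_lt.2 hkN
    push_cast at h1
    linarith
  set s : Fin N → ℝ := fun j => if (j:ℕ) < k then -a else a with hs
  have hne : 2*(k:ℝ) - (N:ℝ) ≠ 0 := ne_of_lt hden
  obtain ⟨j0⟩ : Nonempty (Fin N) := ⟨⟨0, by omega⟩⟩
  have hpot : ∀ (j : Fin N) (x : ℝ), pot N k α 1 j x = (x + s j)^2 - 1 := by
    intro j x
    rw [pot, ← ha, hs]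
    dsimp only
    split_ifs <;> ring
  have hssq : ∀ j, (s j)^2 = a^2 := by
    intro j; rw [hs]; dsimp only; split_ifs <;> ring
  have hcard : ∀ (c d : ℝ), (∑ j : Fin N, (if (j:ℕ) < k then c else d))
      = (k:ℝ) * c + ((N:ℝ) - (k:ℝ)) * d := by
    intro c d
    rw [Fin.sum_univ_eq_sum_range (fun i => if i < k then c else d) N]
    rw [Finset.range_eq_Ico, ← Finset.sum_Ico_consecutive _ (Nat.zero_le k) hkN']
    have h1 : ∑ i ∈ Finset.Ico 0 k, (if i < k then c else d) = (k:ℝ) * c := by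
      rw [Finset.sum_congr rfl (fun i hi => if_pos (Finset.mem_Ico.1 hi).2)]
      rw [Finset.sum_const, Nat.card_Ico, Nat.sub_zero, nsmul_eq_mul]
    have h2 : ∑ i ∈ Finset.Ico k N, (if i < k then c else d) = ((N:ℝ) - (k:ℝ)) * d := by
      rw [Finset.sum_congr rfl (fun i hi => if_neg (not_lt.2 (Finset.mem_Ico.1 hi).1))]
      rw [Finset.sum_const, Nat.card_Ico, nsmul_eq_mul, Nat.cast_sub hkN']
    rw [h1, h2]
  have hsum_s : ∑ j, s j = -α := by
    rw [hs]
    dsimp only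
    rw [hcard (-a) a, ha]
    linear_combination (-α) * mul_inv_cancel₀ hne
  -- quadratic form identity
  have hqf : ∀ V : Fin N → ℝ → ℂ, domDelta N α V →
      qf N k α 1 V = ∑ j, ∫ x in Set.Ioi (0:ℝ),
        ‖deriv (V j) x + (((x + s j : ℝ)) : ℂ) * V j x‖^2 := by
    intro V hV
    obtain ⟨hW2, hv0, hsum⟩ := hV
    have hterm : ∀ j, (∫ x in Set.Ioi (0:ℝ), Tlin N k α 1 V j x * (starRingEnd ℂ) (V j x)).re
        = (∫ x in Set.Ioi (0:ℝ), ‖deriv (V j) x + (((x + s j : ℝ)) : ℂ) * V j x‖^2)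
          + ((deriv (V j) 0 + ((((0:ℝ) + s j : ℝ)) : ℂ) * V j 0) * (starRingEnd ℂ) (V j 0)).re := by
      intro j
      have hedge := (edge_core (hW2 j) (s j)).2.2
      have heq : (fun x : ℝ => Tlin N k α 1 V j x * (starRingEnd ℂ) (V j x))
          = fun x : ℝ => (-(deriv (deriv (V j)) x) + ((((x + s j)^2 - 1 : ℝ)) : ℂ) * V j x)
              * (starRingEnd ℂ) (V j x) := by
        funext x
        rw [Tlin, hpot]
      rw [show (∫ x in Set.Ioi (0:ℝ), Tlin N k α 1 V j x * (starRingEnd ℂ) (V j x))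
          = ∫ x in Set.Ioi (0:ℝ), (-(deriv (deriv (V j)) x) + ((((x + s j)^2 - 1 : ℝ)) : ℂ) * V j x)
              * (starRingEnd ℂ) (V j x) from congrArg _ heq]
      exact hedge
    rw [qf, Complex.re_sum]
    rw [Finset.sum_congr rfl (fun j _ => hterm j), Finset.sum_add_distrib]
    have hb : (∑ j, ((deriv (V j) 0 + ((((0:ℝ) + s j : ℝ)) : ℂ) * V j 0)
        * (starRingEnd ℂ) (V j 0)).re) = 0 := by
      have h1 : ∀ j : Fin N, V j 0 = V j0 0 := fun j => hv0 j j0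
      have h2 : (∑ j, ((deriv (V j) 0 + ((((0:ℝ) + s j : ℝ)) : ℂ) * V j 0)
          * (starRingEnd ℂ) (V j 0)))
          = (∑ j, (deriv (V j) 0 + ((((0:ℝ) + s j : ℝ)) : ℂ) * V j0 0)) * (starRingEnd ℂ) (V j0 0) := by
        rw [Finset.sum_mul]
        exact Finset.sum_congr rfl (fun j _ => by rw [h1 j])
      have h3 : (∑ j, (deriv (V j) 0 + ((((0:ℝ) + s j : ℝ)) : ℂ) * V j0 0)) = 0 := by
        rw [Finset.sum_add_distrib, hsum j0, ← Finset.sum_mul]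
        have h4 : (∑ j, ((((0:ℝ) + s j : ℝ)) : ℂ)) = ((-α : ℝ) : ℂ) := by
          rw [← Complex.ofReal_sum]
          norm_cast
          simpa [zero_add] using hsum_s
        rw [h4]
        push_cast
        ring
      rw [← Complex.re_sum, h2, h3]
      simp
    rw [hb, add_zero]
  set C : ℝ := Real.exp ((ω+1)/2) with hC
  have hCpos : 0 < C := Real.exp_pos _
  have hphiPt : ∀ (j : Fin N) (x : ℝ), ((phiProf N k α ω j x : ℝ) : ℂ)
      = ((C * Real.exp (-(x + s j)^2/2) : ℝ) : ℂ) := by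
    intro j x
    rw [phiProf, ← ha, hs]
    dsimp only
    norm_cast
    split_ifs
    · rw [hC, show -(x - a)^2/2 = -(x + -a)^2/2 from by ring]
    · rfl
  have hphi : ∀ (j : Fin N), (fun x : ℝ => ((phiProf N k α ω j x : ℝ) : ℂ))
      = fun x : ℝ => ((C * Real.exp (-(x + s j)^2/2) : ℝ) : ℂ) :=
    fun j => funext (hphiPt j)
  refine ⟨?_, ?_, ?_⟩
  · -- (a)
    intro V hV
    rw [hqf V hV]
    apply Finset.sum_nonneg
    intro j _
    apply MeasureTheory.integral_nonneg
    intro x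
    positivity
  · -- (b)
    constructor
    · refine ⟨?_, ?_, ?_⟩
      · intro j
        show MemW2 (fun x : ℝ => ((phiProf N k α ω j x : ℝ) : ℂ))
        rw [hphi j]
        exact memW2_gauss C (s j)
      · intro j j'
        show ((phiProf N k α ω j 0 : ℝ) : ℂ) = ((phiProf N k α ω j' 0 : ℝ) : ℂ)
        rw [hphiPt j 0, hphiPt j' 0]
        norm_cast
        rw [zero_add, zero_add, hssq j, hssq j']
      · intro j₀
        have hder : ∀ j : Fin N, deriv (fun x : ℝ => ((phiProf N k α ω j x : ℝ) : ℂ)) 0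
            = ((-(s j) * (C * Real.exp (-a^2/2)) : ℝ) : ℂ) := by
          intro j
          rw [hphi j, gaussC_deriv]
          dsimp only
          norm_cast
          rw [show ((0:ℝ) + s j) = s j from zero_add _, hssq j]
        show (∑ j, deriv (fun x : ℝ => ((phiProf N k α ω j x : ℝ) : ℂ)) 0)
            = (α : ℂ) * ((phiProf N k α ω j₀ 0 : ℝ) : ℂ)
        rw [Finset.sum_congr rfl (fun j _ => hder j), ← Complex.ofReal_sum, ← Finset.sum_mul]
        have h5 : (∑ j : Fin N, -(s j)) = α := by
          rw [Finset.sum_neg_distrib, hsum_s]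
          ring
        rw [h5, hphiPt j₀ 0]
        norm_cast
        rw [show ((0:ℝ) + s j₀) = s j₀ from zero_add _, hssq j₀]
    · intro j x _
      have hTeq : Tlin N k α 1 (fun j x => ((phiProf N k α ω j x : ℝ) : ℂ)) j x
          = -(deriv (deriv (fun x : ℝ => ((phiProf N k α ω j x : ℝ) : ℂ))) x)
            + ((pot N k α 1 j x : ℝ) : ℂ) * ((phiProf N k α ω j x : ℝ) : ℂ) := rfl
      rw [hTeq, hphi j, gaussC_deriv2, hpot, hphiPt j x]
      push_cast
      ring
  · -- (c)
    intro V hV hT0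
    have hqfV := hqf V hV
    obtain ⟨hW2, hv0, hsum⟩ := hV
    have hqf0 : qf N k α 1 V = 0 := by
      rw [qf]
      have hz : ∀ j : Fin N,
          (∫ x in Set.Ioi (0:ℝ), Tlin N k α 1 V j x * (starRingEnd ℂ) (V j x)) = 0 := by
        intro j
        apply MeasureTheory.setIntegral_eq_zero_of_forall_eq_zero
        intro x hx
        rw [hT0 j x hx, zero_mul]
      rw [Finset.sum_congr rfl (fun j _ => hz j)]
      simp
    have hnn : ∀ j : Fin N,
        0 ≤ ∫ x in Set.Ioi (0:ℝ), ‖deriv (V j) x + (((x + s j : ℝ)) : ℂ) * V j x‖^2 :=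
      fun j => MeasureTheory.integral_nonneg (fun x => by positivity)
    have hzero : ∀ j : Fin N,
        (∫ x in Set.Ioi (0:ℝ), ‖deriv (V j) x + (((x + s j : ℝ)) : ℂ) * V j x‖^2) = 0 := by
      have hsum0 : (∑ j, ∫ x in Set.Ioi (0:ℝ),
          ‖deriv (V j) x + (((x + s j : ℝ)) : ℂ) * V j x‖^2) = 0 := by
        rw [← hqfV, hqf0]
      intro j
      exact (Finset.sum_eq_zero_iff_of_nonneg (fun j _ => hnn j)).1 hsum0 j (Finset.mem_univ j)
    have hwzero : ∀ j : Fin N, ∀ x ∈ Set.Ioi (0:ℝ),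
        deriv (V j) x + (((x + s j : ℝ)) : ℂ) * V j x = 0 := by
      intro j
      have hint := (edge_core (hW2 j) (s j)).2.1
      have hae : (fun x => ‖deriv (V j) x + (((x + s j : ℝ)) : ℂ) * V j x‖^2) =ᵐ[mu] 0 := by
        refine (MeasureTheory.integral_eq_zero_iff_of_nonneg (fun x => by positivity) hint).1 ?_
        rw [mu_def]
        exact hzero j
      have haew : (fun x => deriv (V j) x + (((x + s j : ℝ)) : ℂ) * V j x) =ᵐ[mu] 0 := by
        filter_upwards [hae] with x hx
        have h1 : ‖deriv (V j) x + (((x + s j : ℝ)) : ℂ) * V j x‖^2 = 0 := hx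
        have h2 : ‖deriv (V j) x + (((x + s j : ℝ)) : ℂ) * V j x‖ = 0 := by
          nlinarith [norm_nonneg (deriv (V j) x + (((x + s j : ℝ)) : ℂ) * V j x)]
        exact norm_eq_zero.1 h2
      apply eq_zero_on_Ioi_of_ae_zero ?_ haew
      intro x hx
      have h1 : ContinuousAt (deriv (V j)) x :=
        ((hW2 j).1.2.1).continuousAt (Ici_mem_nhds hx)
      have h2 : ContinuousAt (V j) x := ((hW2 j).1.1.1).continuousAt (Ici_mem_nhds hx)
      exact h1.add (((Complex.continuous_ofReal.comp
        (continuous_id.add continuous_const)).continuousAt).mul h2)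
    set cval : Fin N → ℂ := fun j => Complex.exp ((((1 + s j)^2/2 : ℝ)) : ℂ) * V j 1 with hcval
    have hform : ∀ j : Fin N, ∀ x ∈ Set.Ioi (0:ℝ),
        V j x = cval j * ((Real.exp (-(x + s j)^2/2) : ℝ) : ℂ) := by
      intro j x hx
      set g : ℝ → ℂ := fun y => Complex.exp ((((y + s j)^2/2 : ℝ)) : ℂ) * V j y with hg
      have hder : ∀ y ∈ Set.Ioi (0:ℝ), HasDerivAt g 0 y := by
        intro y hy
        have hq : HasDerivAt (fun z : ℝ => ((((z + s j)^2/2 : ℝ)) : ℂ)) (((y + s j : ℝ)) : ℂ) y := by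
          have hr : HasDerivAt (fun z : ℝ => (z + s j)^2/2) (y + s j) y := by
            have h0 := (((hasDerivAt_id y).add_const (s j)).pow 2).div_const 2
            exact h0.congr_deriv (by simp only [id_eq]; ring)
          exact hr.ofReal_comp
        have he := hq.cexp
        have hvd := ((hW2 j).1.1.2.1 y hy).hasDerivAt
        have hprod := he.mul hvd
        have h0 := hwzero j y hy
        refine hprod.congr_deriv ?_
        have hdd : deriv (V j) y = -((((y + s j : ℝ)) : ℂ)) * V j y := by
          linear_combination h0
        rw [hdd]
        ring
      have hkey : ∀ y z : ℝ, 0 < y → y ≤ z → g z = g y := by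
        intro y z hy hyz
        have hii : IntervalIntegrable (fun _ : ℝ => (0:ℂ)) MeasureTheory.volume y z :=
          intervalIntegrable_const
        have hft := intervalIntegral.integral_eq_sub_of_hasDerivAt
          (f := g) (f' := fun _ => (0:ℂ)) ?_ hii
        · have h2 : g z - g y = 0 := by simpa using hft.symm
          linear_combination h2
        · intro t ht
          rw [Set.uIcc_of_le hyz] at ht
          exact hder t (Set.mem_Ioi.2 (lt_of_lt_of_le hy ht.1))
      have hgx : g x = cval j := by
        rcases le_total x 1 with h | h
        · exact (hkey x 1 hx h).symm
        · exact hkey 1 x one_pos h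
      have hsolve : V j x = Complex.exp (-((((x + s j)^2/2 : ℝ)) : ℂ)) * cval j := by
        have hinv : Complex.exp (-((((x + s j)^2/2 : ℝ)) : ℂ))
            * (Complex.exp ((((x + s j)^2/2 : ℝ)) : ℂ) * V j x) = V j x := by
          rw [← mul_assoc, ← Complex.exp_add, neg_add_cancel, Complex.exp_zero, one_mul]
        rw [← hinv]
        rw [show Complex.exp ((((x + s j)^2/2 : ℝ)) : ℂ) * V j x = g x from rfl, hgx]
      rw [hsolve]
      rw [show (((Real.exp (-(x + s j)^2/2) : ℝ)) : ℂ)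
          = Complex.exp (-((((x + s j)^2/2 : ℝ)) : ℂ)) from by
        rw [← Complex.ofReal_neg, ← Complex.ofReal_exp]
        norm_cast
        congr 1
        ring]
      ring
    have hval0 : ∀ j : Fin N, V j 0 = cval j * ((Real.exp (-(a^2)/2) : ℝ) : ℂ) := by
      intro j
      have hlim1 : Filter.Tendsto (V j) (nhdsWithin 0 (Set.Ioi 0)) (nhds (V j 0)) :=
        (((hW2 j).1.1.1 0 Set.self_mem_Ici).mono_left (nhdsWithin_mono 0 Set.Ioi_subset_Ici_self))
      have hcont2 : Continuous (fun x : ℝ => cval j * ((Real.exp (-(x + s j)^2/2) : ℝ) : ℂ)) := by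
        apply continuous_const.mul
        apply Complex.continuous_ofReal.comp
        exact Real.continuous_exp.comp (((continuous_id.add continuous_const).pow 2).neg.div_const 2)
      have hlim2 : Filter.Tendsto (fun x : ℝ => cval j * ((Real.exp (-(x + s j)^2/2) : ℝ) : ℂ))
          (nhdsWithin 0 (Set.Ioi 0))
          (nhds (cval j * ((Real.exp (-((0:ℝ) + s j)^2/2) : ℝ) : ℂ))) :=
        (hcont2.tendsto 0).mono_left nhdsWithin_le_nhds
      have hueq : V j =ᶠ[nhdsWithin (0:ℝ) (Set.Ioi 0)]
          fun x : ℝ => cval j * ((Real.exp (-(x + s j)^2/2) : ℝ) : ℂ) := by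
        filter_upwards [self_mem_nhdsWithin] with x hx using hform j x hx
      have huniq := tendsto_nhds_unique (hlim1.congr' hueq) hlim2
      rw [huniq]
      norm_cast
      rw [show ((0:ℝ) + s j) = s j from zero_add _, hssq j]
    have hexpne : ((Real.exp (-(a^2)/2) : ℝ) : ℂ) ≠ 0 :=
      Complex.ofReal_ne_zero.2 (Real.exp_ne_zero _)
    have hceq : ∀ j : Fin N, cval j = cval j0 := by
      intro j
      have h3 : V j 0 = V j0 0 := hv0 j j0
      rw [hval0 j, hval0 j0] at h3
      exact mul_right_cancel₀ hexpne h3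
    refine ⟨cval j0 / ((C : ℝ) : ℂ), ?_⟩
    intro j x hx
    rw [hform j x hx, hceq j, hphiPt j x]
    have hCne : ((C : ℝ) : ℂ) ≠ 0 := Complex.ofReal_ne_zero.2 (ne_of_gt hCpos)
    push_cast
    field_simp
end
end

section
/- Triviality of the kernel of T^α_{1,k}: Let N ≥ 3 be an integer, α ≠ 0 and k ∈ {1,…,⌊(N−1)/2⌋}. Then ker(T^α_{1,k}) = {0}: every V ∈ dom(T^α_{1,k}) with T^α_{1,k}V = 0 is identically zero. -/
open MeasureTheory Set Filter

noncomputable section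

def Phi (b : ℝ) (x : ℝ) : ℂ := Complex.exp (-((x:ℂ) - b)^2/2) * ((x:ℂ) - b)
def Phi' (b : ℝ) (x : ℝ) : ℂ := Complex.exp (-((x:ℂ) - b)^2/2) * (1 - ((x:ℂ) - b)^2)

lemma hasDerivAt_w (b x : ℝ) : HasDerivAt (fun x : ℝ => ((x:ℂ) - b)) 1 x := by
  simpa using ((Complex.ofRealCLM.hasDerivAt (x := x)).sub_const (b:ℂ))

lemma hasDerivAt_gauss (b x : ℝ) :
    HasDerivAt (fun x : ℝ => Complex.exp (-((x:ℂ) - b)^2/2))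
      (Complex.exp (-((x:ℂ) - b)^2/2) * (-((x:ℂ) - b))) x := by
  have h1 : HasDerivAt (fun x : ℝ => -((x:ℂ) - b)^2/2) (-((x:ℂ) - b)) x := by
    simp only [pow_two]
    exact ((((hasDerivAt_w b x).mul (hasDerivAt_w b x))).neg.div_const 2).congr_deriv (by ring)
  simpa using h1.cexp

lemma hasDerivAt_Phi (b x : ℝ) : HasDerivAt (Phi b) (Phi' b x) x := by
  have := (hasDerivAt_gauss b x).mul (hasDerivAt_w b x)
  exact this.congr_deriv (by unfold Phi'; ring)

lemma hasDerivAt_Phi' (b x : ℝ) :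
    HasDerivAt (Phi' b) ((((x:ℂ) - b)^2 - 3) * Phi b x) x := by
  have h2 : HasDerivAt (fun x : ℝ => (1 - ((x:ℂ) - b)^2)) (-(2*((x:ℂ)-b))) x := by
    simp only [pow_two]
    exact (((hasDerivAt_w b x).mul (hasDerivAt_w b x)).const_sub 1).congr_deriv (by ring)
  have := (hasDerivAt_gauss b x).mul h2
  exact this.congr_deriv (by unfold Phi; ring)




lemma Phi_eq (b x : ℝ) :
    Phi b x = ((Real.exp (-(x-b)^2/2) * (x - b) : ℝ) : ℂ) := by
  unfold Phi
  push_cast [Complex.ofReal_exp]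
  ring_nf

lemma Phi'_eq (b x : ℝ) :
    Phi' b x = ((Real.exp (-(x-b)^2/2) * (1 - (x - b)^2) : ℝ) : ℂ) := by
  unfold Phi'
  push_cast [Complex.ofReal_exp]
  ring_nf

lemma continuous_Phi (b : ℝ) : Continuous (Phi b) := by
  unfold Phi; fun_prop

lemma continuous_Phi' (b : ℝ) : Continuous (Phi' b) := by
  unfold Phi'; fun_prop

lemma memL2_of_sq_bound {f : ℝ → ℂ} (hc : Continuous f) (C b : ℝ)
    (hbd : ∀ x, ‖f x‖^2 ≤ C * Real.exp (-(x-b)^2/2)) : MemLp f 2 mu := by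
  have hmu : mu = volume.restrict (Set.Ioi (0:ℝ)) := rfl
  rw [hmu, memLp_two_iff_integrable_sq_norm (hc.aestronglyMeasurable.restrict)]
  have hg : Integrable (fun x => C * Real.exp (-(1/2)*(x-b)^2)) (volume.restrict (Set.Ioi (0:ℝ))) := by
    exact (((integrable_exp_neg_mul_sq (by norm_num : (0:ℝ) < 1/2)).comp_sub_right
      b).const_mul C).restrict
  refine Integrable.mono' hg ((hc.norm.pow 2).aestronglyMeasurable.restrict) ?_
  refine ae_of_all _ fun x => ?_
  have := hbd x
  rw [Real.norm_eq_abs, abs_of_nonneg (by positivity)]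
  calc ‖f x‖^2 ≤ C * Real.exp (-(x-b)^2/2) := this
    _ = C * Real.exp (-(1/2)*(x-b)^2) := by ring_nf

lemma gauss_sq_bound (t : ℝ) :
    (Real.exp (-t^2/2) * t)^2 ≤ 2 * Real.exp (-t^2/2) := by
  set s := t^2 with hs
  have hs0 : 0 ≤ s := sq_nonneg t
  have h1 : s ≤ 2 * Real.exp (s/2) := by
    nlinarith [Real.add_one_le_exp (s/2)]
  have h2 : (Real.exp (-s/2) * t)^2 = s * Real.exp (-s) := by
    rw [mul_pow, pow_two (Real.exp _), ← Real.exp_add]; ring_nf; rw [hs]; ring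
  rw [h2]
  calc s * Real.exp (-s) ≤ (2 * Real.exp (s/2)) * Real.exp (-s) := by
        exact mul_le_mul_of_nonneg_right h1 (Real.exp_pos _).le
    _ = 2 * Real.exp (-s/2) := by rw [mul_assoc, ← Real.exp_add]; ring_nf

lemma gauss_sq_bound' (t : ℝ) :
    (Real.exp (-t^2/2) * (1 - t^2))^2 ≤ 16 * Real.exp (-t^2/2) := by
  set s := t^2 with hs
  have hs0 : 0 ≤ s := sq_nonneg t
  have h1 : 1 + s ≤ 4 * Real.exp (s/4) := by
    nlinarith [Real.add_one_le_exp (s/4)]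
  have h3 : (1 - s)^2 ≤ (4 * Real.exp (s/4))^2 := by
    have : |1 - s| ≤ 1 + s := by
      rw [abs_le]; constructor <;> nlinarith
    calc (1-s)^2 = |1-s|^2 := (sq_abs _).symm
      _ ≤ (1+s)^2 := by nlinarith [abs_nonneg (1-s)]
      _ ≤ (4 * Real.exp (s/4))^2 := by nlinarith [Real.exp_pos (s/4)]
  have h2 : (Real.exp (-s/2) * (1 - s))^2 = Real.exp (-s) * (1-s)^2 := by
    rw [mul_pow, pow_two (Real.exp _), ← Real.exp_add]; ring_nf
  rw [h2]
  calc Real.exp (-s) * (1-s)^2 ≤ Real.exp (-s) * (16 * Real.exp (s/2)) := by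
        have : (4 * Real.exp (s/4))^2 = 16 * Real.exp (s/2) := by
          rw [mul_pow, pow_two (Real.exp _), ← Real.exp_add]; norm_num; ring_nf
        exact mul_le_mul_of_nonneg_left (this ▸ h3) (Real.exp_pos _).le
    _ = 16 * Real.exp (-s/2) := by rw [mul_comm, mul_assoc, ← Real.exp_add]; ring_nf

lemma memL2_Phi (b : ℝ) : MemLp (Phi b) 2 mu := by
  refine memL2_of_sq_bound (continuous_Phi b) 2 b fun x => ?_
  rw [Phi_eq, Complex.norm_real, Real.norm_eq_abs, sq_abs]
  exact gauss_sq_bound (x - b)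

lemma memL2_Phi' (b : ℝ) : MemLp (Phi' b) 2 mu := by
  refine memL2_of_sq_bound (continuous_Phi' b) 16 b fun x => ?_
  rw [Phi'_eq, Complex.norm_real, Real.norm_eq_abs, sq_abs]
  exact gauss_sq_bound' (x - b)

lemma integrable_mul_L2 {f g : ℝ → ℂ} (hf : MemLp f 2 mu) (hg : MemLp g 2 mu) :
    Integrable (fun x => f x * g x) mu := by
  have hif : Integrable (fun x => ‖f x‖^2) mu :=
    (memLp_two_iff_integrable_sq_norm hf.1).1 hf
  have hig : Integrable (fun x => ‖g x‖^2) mu :=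
    (memLp_two_iff_integrable_sq_norm hg.1).1 hg
  refine Integrable.mono' (hif.add hig) (hf.1.mul hg.1) (ae_of_all _ fun x => ?_)
  rw [norm_mul]
  simp only [Pi.add_apply]
  nlinarith [sq_nonneg (‖f x‖ - ‖g x‖), norm_nonneg (f x), norm_nonneg (g x)]

lemma Phi_zero (b : ℝ) : Phi b 0 = Complex.exp (-(b:ℂ)^2/2) * (-(b:ℂ)) := by
  unfold Phi
  norm_num

lemma Phi'_zero (b : ℝ) : Phi' b 0 = Complex.exp (-(b:ℂ)^2/2) * (1 - (b:ℂ)^2) := by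
  unfold Phi'
  norm_num


lemma boundary_vals (b : ℝ) (v : ℝ → ℂ) (c : ℂ)
    (hcont : ContinuousOn v (Ici 0)) (hcont' : ContinuousOn (deriv v) (Ici 0))
    (heq : ∀ x ∈ Ioi (0:ℝ), v x = c * Phi b x) :
    v 0 = c * Phi b 0 ∧ deriv v 0 = c * Phi' b 0 := by
  constructor
  · have t1 : Tendsto v (nhdsWithin 0 (Ioi 0)) (nhds (v 0)) :=
      ((hcont 0 self_mem_Ici).mono Ioi_subset_Ici_self).tendsto
    have hc : Tendsto (fun x => c * Phi b x) (nhdsWithin 0 (Ioi 0)) (nhds (c * Phi b 0)) :=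
      ((continuous_Phi b).continuousWithinAt.tendsto).const_mul c
    have t2 : Tendsto v (nhdsWithin 0 (Ioi 0)) (nhds (c * Phi b 0)) :=
      Filter.Tendsto.congr'
        (Filter.eventuallyEq_of_mem self_mem_nhdsWithin (fun x hx => (heq x hx).symm)) hc
    exact tendsto_nhds_unique t1 t2
  · have hder : ∀ x ∈ Ioi (0:ℝ), deriv v x = c * Phi' b x := by
      intro x hx
      have hev : v =ᶠ[nhds x] fun y => c * Phi b y :=
        Filter.eventuallyEq_of_mem (isOpen_Ioi.mem_nhds hx) heq
      rw [hev.deriv_eq, ((hasDerivAt_Phi b x).const_mul c).deriv]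
    have t1 : Tendsto (deriv v) (nhdsWithin 0 (Ioi 0)) (nhds (deriv v 0)) :=
      ((hcont' 0 self_mem_Ici).mono Ioi_subset_Ici_self).tendsto
    have hc : Tendsto (fun x => c * Phi' b x) (nhdsWithin 0 (Ioi 0)) (nhds (c * Phi' b 0)) :=
      ((continuous_Phi' b).continuousWithinAt.tendsto).const_mul c
    have t2 : Tendsto (deriv v) (nhdsWithin 0 (Ioi 0)) (nhds (c * Phi' b 0)) :=
      Filter.Tendsto.congr'
        (Filter.eventuallyEq_of_mem self_mem_nhdsWithin (fun x hx => (hder x hx).symm)) hc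
    exact tendsto_nhds_unique t1 t2

lemma sum_pm (N k : ℕ) (hkN : k < N) (t : ℂ) :
    (∑ j : Fin N, (if (j:ℕ) < k then t else -t)) = (k:ℂ) * t - ((N:ℂ) - (k:ℂ)) * t := by
  classical
  rw [Finset.sum_ite]
  have hfil : Finset.univ.filter (fun j : Fin N => (j:ℕ) < k) = Finset.Iio (⟨k, hkN⟩ : Fin N) := by
    ext j
    simp [Finset.mem_filter, Finset.mem_Iio, Fin.lt_def]
  have hcard : (Finset.univ.filter (fun j : Fin N => (j:ℕ) < k)).card = k := by
    rw [hfil, Fin.card_Iio]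
  have hcard2 : (Finset.univ.filter (fun j : Fin N => ¬ (j:ℕ) < k)).card = N - k := by
    have := Finset.card_filter_add_card_filter_not
      (s := (Finset.univ : Finset (Fin N))) (p := fun j : Fin N => (j:ℕ) < k)
    simp only [Finset.card_univ, Fintype.card_fin] at this
    omega
  rw [Finset.sum_const, Finset.sum_const, hcard, hcard2]
  have : ((N - k : ℕ) : ℂ) = (N:ℂ) - (k:ℂ) := by
    push_cast [Nat.cast_sub (le_of_lt hkN)]; ring
  simp [nsmul_eq_mul, this]
  ring

lemma Phi_ne_zero {b x : ℝ} (h : x ≠ b) : Phi b x ≠ 0 := by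
  unfold Phi
  refine mul_ne_zero (Complex.exp_ne_zero _) ?_
  simpa [sub_eq_zero] using fun hc => h (by exact_mod_cast hc)

lemma Phi_at_b (b : ℝ) : Phi b b = 0 := by simp [Phi]

lemma Phi'_at_b (b : ℝ) : Phi' b b = 1 := by simp [Phi']

lemma const_of_deriv0 {f : ℝ → ℂ} {s : Set ℝ} (hconv : Convex ℝ s) (ho : IsOpen s)
    (hd : ∀ x ∈ s, HasDerivAt f 0 x) {x y : ℝ} (hx : x ∈ s) (hy : y ∈ s) : f x = f y := by
  refine hconv.is_const_of_fderivWithin_eq_zero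
    (fun z hz => ((hd z hz).differentiableAt).differentiableWithinAt)
    (fun z hz => ?_) hx hy
  rw [fderivWithin_of_isOpen ho hz, (hasDerivAt_iff_hasFDerivAt.mp (hd z hz)).fderiv]
  ext t
  simp

/-- Any `L²` kernel element on a half-line is a multiple of the Gaussian profile. -/
lemma solution_eq (b : ℝ) (v : ℝ → ℂ)
    (hv : ∀ x ∈ Ioi (0:ℝ), DifferentiableAt ℝ v x)
    (hv' : ∀ x ∈ Ioi (0:ℝ), DifferentiableAt ℝ (deriv v) x)
    (hode : ∀ x ∈ Ioi (0:ℝ), deriv (deriv v) x = (((x:ℂ) - b)^2 - 3) * v x)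
    (hL2v : MemLp v 2 mu) (hL2v' : MemLp (deriv v) 2 mu) :
    ∃ c : ℂ, ∀ x ∈ Ioi (0:ℝ), v x = c * Phi b x := by
  set W : ℝ → ℂ := fun x => deriv v x * Phi b x - v x * Phi' b x with hWdef
  -- W has zero derivative on Ioi 0
  have hWd : ∀ x ∈ Ioi (0:ℝ), HasDerivAt W 0 x := by
    intro x hx
    have hv1 : HasDerivAt v (deriv v x) x := (hv x hx).hasDerivAt
    have hv2 : HasDerivAt (deriv v) (deriv (deriv v) x) x := (hv' x hx).hasDerivAt
    have := (hv2.mul (hasDerivAt_Phi b x)).sub (hv1.mul (hasDerivAt_Phi' b x))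
    exact this.congr_deriv (by rw [hode x hx]; ring)
  -- W is constant on Ioi 0
  have hWconst : ∀ x ∈ Ioi (0:ℝ), W x = W 1 :=
    fun x hx => const_of_deriv0 (convex_Ioi 0) isOpen_Ioi hWd hx (by norm_num)
  -- W is integrable, hence the constant is zero
  have hWint : Integrable W mu :=
    (integrable_mul_L2 hL2v' (memL2_Phi b)).sub (integrable_mul_L2 hL2v (memL2_Phi' b))
  have hW1 : W 1 = 0 := by
    by_contra hne
    have hae : W =ᵐ[mu] (fun _ => W 1) := by
      have : ∀ᵐ x ∂mu, x ∈ Ioi (0:ℝ) :=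
        (ae_restrict_iff' measurableSet_Ioi).2 (ae_of_all _ fun x hx => hx)
      filter_upwards [this] with x hx using hWconst x hx
    have hconst : Integrable (fun _ : ℝ => W 1) mu := hWint.congr hae
    rcases (integrable_const_iff).1 hconst with h | h
    · exact hne h
    · have : mu Set.univ = ⊤ := by
        simp [mu, Measure.restrict_apply_univ, Real.volume_Ioi]
      have h := h.measure_univ_lt_top; rw [this] at h; exact (lt_irrefl _ h).elim
  have hW0 : ∀ x ∈ Ioi (0:ℝ), W x = 0 := fun x hx => (hWconst x hx).trans hW1
  -- ratio is constant on open convex subsets avoiding b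
  have key : ∀ s : Set ℝ, Convex ℝ s → IsOpen s → s ⊆ Ioi (0:ℝ) → (∀ x ∈ s, x ≠ b) →
      ∀ x ∈ s, ∀ y ∈ s, v x * (Phi b x)⁻¹ = v y * (Phi b y)⁻¹ := by
    intro s hconv ho hsub hne x hx y hy
    have hder : ∀ z ∈ s, HasDerivAt (fun x => v x * (Phi b x)⁻¹) 0 z := by
      intro z hz
      have hA : Phi b z ≠ 0 := Phi_ne_zero (hne z hz)
      have h1 : HasDerivAt v (deriv v z) z := (hv z (hsub hz)).hasDerivAt
      have h3 : HasDerivAt (fun y => (Phi b y)⁻¹) (-((Phi b z)^2)⁻¹ * Phi' b z) z :=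
        (hasDerivAt_inv hA).comp z (hasDerivAt_Phi b z)
      have h2 := h1.mul h3
      refine h2.congr_deriv ?_
      have hw := hW0 z (hsub hz)
      simp only [hWdef] at hw
      field_simp
      linear_combination hw
    exact const_of_deriv0 hconv ho hder hx hy
  have hbv : ∀ {x : ℝ} {c : ℂ}, Phi b x ≠ 0 → v x * (Phi b x)⁻¹ = c → v x = c * Phi b x := by
    intro x c hA h
    field_simp at h
    linear_combination h
  by_cases hb : 0 < b
  · -- Phi b vanishes at b; split into (0,b) and (b,∞)
    set c₂ : ℂ := v (b+1) * (Phi b (b+1))⁻¹ with hc2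
    set c₁ : ℂ := v (b/2) * (Phi b (b/2))⁻¹ with hc1
    have hs₂ : ∀ x ∈ Ioi b, v x = c₂ * Phi b x := by
      intro x hx
      exact hbv (Phi_ne_zero (ne_of_gt hx))
        (key (Ioi b) (convex_Ioi b) isOpen_Ioi
          (fun y hy => lt_trans hb hy) (fun y hy => ne_of_gt hy) x hx (b+1) (by simp))
    have hs₁ : ∀ x ∈ Ioo 0 b, v x = c₁ * Phi b x := by
      intro x hx
      exact hbv (Phi_ne_zero (ne_of_lt hx.2))
        (key (Ioo 0 b) (convex_Ioo 0 b) isOpen_Ioo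
          (fun y hy => hy.1) (fun y hy => ne_of_lt hy.2) x hx (b/2) (Set.mem_Ioo.mpr ⟨by linarith, by linarith⟩))
    -- v b = 0
    have hvb : v b = 0 := by
      have := hW0 b hb
      simp only [hWdef, Phi_at_b, Phi'_at_b, mul_zero, mul_one, zero_sub, neg_eq_zero] at this
      exact this
    -- deriv v b = c₂ from the right
    have hder_right : ∀ x ∈ Ioi b, deriv v x = c₂ * Phi' b x := by
      intro x hx
      have hev : v =ᶠ[nhds x] fun y => c₂ * Phi b y :=
        Filter.eventuallyEq_of_mem (isOpen_Ioi.mem_nhds hx) hs₂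
      rw [hev.deriv_eq, ((hasDerivAt_Phi b x).const_mul c₂).deriv]
    have hder_left : ∀ x ∈ Ioo 0 b, deriv v x = c₁ * Phi' b x := by
      intro x hx
      have hev : v =ᶠ[nhds x] fun y => c₁ * Phi b y :=
        Filter.eventuallyEq_of_mem (isOpen_Ioo.mem_nhds hx) hs₁
      rw [hev.deriv_eq, ((hasDerivAt_Phi b x).const_mul c₁).deriv]
    have hcontb : ContinuousAt (deriv v) b := (hv' b hb).continuousAt
    have hR : deriv v b = c₂ := by
      have t1 : Tendsto (deriv v) (nhdsWithin b (Ioi b)) (nhds (deriv v b)) :=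
        hcontb.continuousWithinAt.tendsto
      have hc : Tendsto (fun x => c₂ * Phi' b x) (nhdsWithin b (Ioi b)) (nhds (c₂ * Phi' b b)) :=
        ((continuous_Phi' b).continuousWithinAt.tendsto).const_mul c₂
      have t2 : Tendsto (deriv v) (nhdsWithin b (Ioi b)) (nhds (c₂ * Phi' b b)) :=
        Filter.Tendsto.congr'
          (Filter.eventuallyEq_of_mem self_mem_nhdsWithin
            (fun x hx => (hder_right x hx).symm)) hc
      have h := tendsto_nhds_unique t1 t2
      rw [h, Phi'_at_b, mul_one]
    have hL : deriv v b = c₁ := by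
      have t1 : Tendsto (deriv v) (nhdsWithin b (Iio b)) (nhds (deriv v b)) :=
        hcontb.continuousWithinAt.tendsto
      have hc : Tendsto (fun x => c₁ * Phi' b x) (nhdsWithin b (Iio b)) (nhds (c₁ * Phi' b b)) :=
        ((continuous_Phi' b).continuousWithinAt.tendsto).const_mul c₁
      have hmem : Ioo (0:ℝ) b ∈ nhdsWithin b (Iio b) := Ioo_mem_nhdsLT hb
      have t2 : Tendsto (deriv v) (nhdsWithin b (Iio b)) (nhds (c₁ * Phi' b b)) :=
        Filter.Tendsto.congr'
          (Filter.eventuallyEq_of_mem hmem (fun x hx => (hder_left x hx).symm)) hc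
      have h := tendsto_nhds_unique t1 t2
      rw [h, Phi'_at_b, mul_one]
    refine ⟨c₂, fun x hx => ?_⟩
    rcases lt_trichotomy x b with h | h | h
    · rw [hL.symm.trans hR] at hs₁
      exact hs₁ x ⟨hx, h⟩
    · rw [h, hvb, Phi_at_b, mul_zero]
    · exact hs₂ x h
  · -- b ≤ 0 : Phi b never vanishes on Ioi 0
    push_neg at hb
    set c : ℂ := v 1 * (Phi b 1)⁻¹ with hc
    refine ⟨c, fun x hx => ?_⟩
    have hxb : x ≠ b := ne_of_gt (lt_of_le_of_lt hb hx)
    exact hbv (Phi_ne_zero hxb)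
      (key (Ioi 0) (convex_Ioi 0) isOpen_Ioi (fun y hy => hy)
        (fun y hy => ne_of_gt (lt_of_le_of_lt hb hy)) x hx 1 (by norm_num))

/-- the kernel of `T^α_{1,k}` is trivial. -/
theorem T1_kernel_trivial
    (N k : ℕ) (hN : 3 ≤ N) (α : ℝ) (hα : α ≠ 0) (hk1 : 1 ≤ k) (hk2 : k ≤ (N - 1) / 2)
    (V : Fin N → ℝ → ℂ) (hdom : domDelta N α V)
    (hker : ∀ j : Fin N, ∀ x ∈ Set.Ioi (0:ℝ), Tlin N k α 3 V j x = 0) :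
    ∀ j : Fin N, ∀ x ∈ Set.Ioi (0:ℝ), V j x = 0 := by
  obtain ⟨hW2, heq0, hsum⟩ := hdom
  have hkN : 2*k < N := by omega
  set d : ℝ := 2*(k:ℝ) - (N:ℝ) with hd
  have hdlt : d < 0 := by
    have : (2*(k:ℝ)) < N := by exact_mod_cast hkN
    simp only [hd]; linarith
  have hdne : d ≠ 0 := ne_of_lt hdlt
  set a : ℝ := α / d with ha
  have hane : a ≠ 0 := div_ne_zero hα hdne
  set bj : Fin N → ℝ := fun j => if (j:ℕ) < k then a else -a with hbj
  have hpot : ∀ (j : Fin N) (x : ℝ), ((pot N k α 3 j x : ℝ) : ℂ) = ((x:ℂ) - (bj j : ℂ))^2 - 3 := by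
    intro j x
    by_cases hj : (j:ℕ) < k <;>
      simp only [pot, hbj, hj, if_true, if_false, ← hd, ← ha] <;> push_cast <;> ring
  have hrep : ∀ j, ∃ c : ℂ, (∀ x ∈ Ioi (0:ℝ), V j x = c * Phi (bj j) x) ∧
      V j 0 = c * Phi (bj j) 0 ∧ deriv (V j) 0 = c * Phi' (bj j) 0 := by
    intro j
    obtain ⟨⟨⟨hcont, hdiff, hL2, hL2'⟩, hcont', hdiff', hL2''⟩, _⟩ := hW2 j
    have hode : ∀ x ∈ Ioi (0:ℝ), deriv (deriv (V j)) x = (((x:ℂ) - bj j)^2 - 3) * V j x := by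
      intro x hx
      have hk0 := hker j x hx
      simp only [Tlin] at hk0
      rw [← hpot j x]
      linear_combination -hk0
    obtain ⟨c, hcrep⟩ := solution_eq (bj j) (V j) hdiff hdiff' hode hL2 hL2'
    exact ⟨c, hcrep, boundary_vals (bj j) (V j) c hcont hcont' hcrep⟩
  choose c hc1 hc2 hc3 using hrep
  set E : ℂ := Complex.exp (-(a:ℂ)^2/2) with hE
  have hEne : E ≠ 0 := Complex.exp_ne_zero _
  have haCne : ((a:ℝ):ℂ) ≠ 0 := by exact_mod_cast hane
  have hPhi0 : ∀ j, Phi (bj j) 0 = E * (if (j:ℕ) < k then -(a:ℂ) else (a:ℂ)) := by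
    intro j
    by_cases hj : (j:ℕ) < k <;>
      simp only [hbj, hj, if_true, if_false, Phi_zero, hE] <;> push_cast <;> ring_nf
  have hPhi'0 : ∀ j, Phi' (bj j) 0 = E * (1 - (a:ℂ)^2) := by
    intro j
    by_cases hj : (j:ℕ) < k <;>
      simp only [hbj, hj, if_true, if_false, Phi'_zero, hE] <;> push_cast <;> ring_nf
  have hj0 : (0 : ℕ) < N := by omega
  set j0 : Fin N := ⟨0, hj0⟩ with hj0def
  have hj0k : ((j0:ℕ)) < k := by simp [hj0def]; omega
  set t : ℂ := c j0 with ht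
  have hcj : ∀ j, c j = (if (j:ℕ) < k then t else -t) := by
    intro j
    have hv := heq0 j j0
    rw [hc2 j, hc2 j0, hPhi0 j, hPhi0 j0, if_pos hj0k] at hv
    by_cases hj : (j:ℕ) < k
    · rw [if_pos hj] at hv ⊢
      have hne : E * (-(a:ℂ)) ≠ 0 := mul_ne_zero hEne (neg_ne_zero.mpr haCne)
      exact mul_right_cancel₀ hne hv
    · rw [if_neg hj] at hv ⊢
      have hne : E * (a:ℂ) ≠ 0 := mul_ne_zero hEne haCne
      have hv' : c j * (E * (a:ℂ)) = (-t) * (E * (a:ℂ)) := by linear_combination hv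
      exact mul_right_cancel₀ hne hv'
  -- the sum condition
  have hsum0 := hsum j0
  have hderiv_eq : ∀ j, deriv (V j) 0 = c j * (E * (1 - (a:ℂ)^2)) := by
    intro j; rw [hc3 j, hPhi'0 j]
  have hsumc : (∑ j, deriv (V j) 0) = ((k:ℂ) * t - ((N:ℂ) - (k:ℂ)) * t) * (E * (1 - (a:ℂ)^2)) := by
    rw [Finset.sum_congr rfl (fun j _ => by rw [hderiv_eq j, hcj j]), ← Finset.sum_mul,
      sum_pm N k (by omega) t]
  have hrhs : (α:ℂ) * V j0 0 = (α:ℂ) * (t * (E * (-(a:ℂ)))) := by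
    rw [hc2 j0, hPhi0 j0, if_pos hj0k, ht]
  have hdC : ((d:ℝ):ℂ) = 2*(k:ℂ) - (N:ℂ) := by rw [hd]; push_cast; ring
  have hdCne : ((d:ℝ):ℂ) ≠ 0 := by exact_mod_cast hdne
  have haC : ((a:ℝ):ℂ) = (α:ℂ) / ((d:ℝ):ℂ) := by rw [ha]; push_cast; ring
  have key : t * (((d:ℝ):ℂ) * (1 - (a:ℂ)^2) + (α:ℂ) * (a:ℂ)) * E = 0 := by
    have h := hsum0
    rw [hsumc, hrhs] at h
    linear_combination h + t * E * (1 - (a:ℂ)^2) * hdC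
  have hfac : (((d:ℝ):ℂ) * (1 - (a:ℂ)^2) + (α:ℂ) * (a:ℂ)) = ((d:ℝ):ℂ) := by
    rw [haC]; field_simp; ring
  rw [hfac] at key
  have ht0 : t = 0 := by
    rcases mul_eq_zero.mp key with h | h
    · rcases mul_eq_zero.mp h with h' | h'
      · exact h'
      · exact absurd h' hdCne
    · exact absurd h hEne
  have hc0 : ∀ j, c j = 0 := by
    intro j; rw [hcj j, ht0]; simp
  intro j x hx
  rw [hc1 j x hx, hc0 j, zero_mul]

end
end

section
/- Kernel of the unperturbed operator T⁰₁ (α = 0): Let N ≥ 2 be an integer and let φ₀(x) = e^{−x²/2}. Then the kernel of T⁰₁ is the (N−1)-dimensional space spanned by the vectors Φ̂_{0,j} = (0,…,0, φ₀', −φ₀', 0,…,0) (with φ₀' in position j and −φ₀' in position j+1), j = 1,…,N−1. Equivalently, V ∈ dom(T⁰₁) satisfies T⁰₁V = 0 if and only if V = (c_j φ₀')_{j=1}^N for constants c_j with c₁ + … + c_N = 0. -/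
open MeasureTheory Set Filter

noncomputable section

def phi0R (x : ℝ) : ℝ := x * Real.exp (-x^2/2)
def phi1R (x : ℝ) : ℝ := (1 - x^2) * Real.exp (-x^2/2)

lemma hasDerivAt_expsq (x : ℝ) :
    HasDerivAt (fun y : ℝ => Real.exp (-y^2/2)) (-x * Real.exp (-x^2/2)) x := by
  have h1 : HasDerivAt (fun y : ℝ => -y^2/2) (-x) x := by
    have := ((hasDerivAt_pow 2 x).neg.div_const 2)
    refine this.congr_deriv ?_; ring
  simpa [mul_comm] using h1.exp

lemma hasDerivAt_phi0R (x : ℝ) : HasDerivAt phi0R (phi1R x) x := by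
  have := (hasDerivAt_id x).mul (hasDerivAt_expsq x)
  refine this.congr_deriv ?_
  unfold phi1R; simp [id]; ring

lemma hasDerivAt_phi1R (x : ℝ) : HasDerivAt phi1R ((x^2-3) * phi0R x) x := by
  have h1 : HasDerivAt (fun y : ℝ => 1 - y^2) (-(2*x)) x := by
    simpa using ((hasDerivAt_pow 2 x).const_sub 1)
  have := h1.mul (hasDerivAt_expsq x)
  refine this.congr_deriv ?_
  unfold phi0R; ring

def phi0C (x : ℝ) : ℂ := (phi0R x : ℂ)
def phi1C (x : ℝ) : ℂ := (phi1R x : ℂ)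

lemma hasDerivAt_phi0C (x : ℝ) : HasDerivAt phi0C (phi1C x) x :=
  (hasDerivAt_phi0R x).ofReal_comp

lemma hasDerivAt_phi1C (x : ℝ) : HasDerivAt phi1C (((x:ℂ)^2-3) * phi0C x) x := by
  have := (hasDerivAt_phi1R x).ofReal_comp
  refine this.congr_deriv ?_
  unfold phi0C
  push_cast
  ring

lemma phi0R_pos {x : ℝ} (hx : 0 < x) : 0 < phi0R x :=
  mul_pos hx (Real.exp_pos _)

lemma phi0C_ne {x : ℝ} (hx : 0 < x) : phi0C x ≠ 0 := by
  simp [phi0C, Complex.ofReal_ne_zero, (phi0R_pos hx).ne']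

-- constancy on Ioi 0
lemma const_of_deriv_zero {g : ℝ → ℂ} (h : ∀ x ∈ Set.Ioi (0:ℝ), HasDerivAt g 0 x) :
    ∀ x ∈ Set.Ioi (0:ℝ), g x = g 1 := by
  intro x hx
  have hdiff : DifferentiableOn ℝ g (Set.Ioi (0:ℝ)) :=
    fun y hy => ((h y hy).differentiableAt).differentiableWithinAt
  refine (convex_Ioi (0:ℝ)).is_const_of_fderivWithin_eq_zero hdiff ?_ hx (by norm_num)
  intro y hy
  rw [fderivWithin_of_isOpen isOpen_Ioi hy]
  have H : HasFDerivAt g (0 : ℝ →L[ℝ] ℂ) y := by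
    have := (h y hy).hasFDerivAt
    refine this.congr_fderiv ?_
    ext; simp
  exact H.fderiv


lemma not_memL2_of_ge_one (f : ℝ → ℂ) (M : ℝ)
    (h : ∀ x, M ≤ x → 1 ≤ ‖f x‖) (hf : MemL2 f) : False := by
  set M' := max M 1 with hM'
  have hsub : Set.Ioi M' ⊆ Set.Ioi (0:ℝ) := fun x hx => lt_of_lt_of_le one_pos
    (le_trans (le_max_right M 1) (le_of_lt hx))
  have hres : MemLp f 2 (mu.restrict (Set.Ioi M')) := hf.restrict _
  have hmeq : mu.restrict (Set.Ioi M') = volume.restrict (Set.Ioi M') := by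
    rw [mu, Measure.restrict_restrict measurableSet_Ioi]
    congr 1
    exact Set.inter_eq_left.mpr hsub
  rw [hmeq] at hres
  have hone : MemLp (fun _ : ℝ => (1:ℝ)) 2 (volume.restrict (Set.Ioi M')) := by
    refine MemLp.mono hres aestronglyMeasurable_const ?_
    rw [ae_restrict_iff' measurableSet_Ioi]
    filter_upwards with x hx
    simpa using h x (le_trans (le_max_left M 1) (le_of_lt hx))
  have hμ : (volume.restrict (Set.Ioi M')) ≠ 0 := by
    intro hcon
    have h0 : (volume.restrict (Set.Ioi M')) Set.univ = 0 := by rw [hcon]; rfl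
    rw [Measure.restrict_apply_univ, Real.volume_Ioi] at h0
    exact ENNReal.top_ne_zero h0
  have := hone.eLpNorm_lt_top
  rw [eLpNorm_const (1:ℝ) (by norm_num) hμ] at this
  rw [Measure.restrict_apply_univ, Real.volume_Ioi] at this
  simp at this

lemma tendsto_B (C a : ℝ) (ha : 0 < a) :
    Tendsto (fun x : ℝ => C * (x * Real.exp (-x^2/2)) - a * (Real.exp (x^2/2) / x^2))
      atTop atBot := by
  have h1 : Tendsto (fun x : ℝ => x * Real.exp (-x^2/2)) atTop (nhds 0) := by
    have hb : Tendsto (fun x : ℝ => x * Real.exp (-x)) atTop (nhds 0) := by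
      simpa using Real.tendsto_pow_mul_exp_neg_atTop_nhds_zero 1
    refine squeeze_zero' ?_ ?_ hb
    · filter_upwards [eventually_ge_atTop (0:ℝ)] with x hx
      positivity
    · filter_upwards [eventually_ge_atTop (2:ℝ)] with x hx
      have : -x^2/2 ≤ -x := by nlinarith
      exact mul_le_mul_of_nonneg_left (Real.exp_le_exp.mpr this) (by linarith)
  have h2 : Tendsto (fun x : ℝ => Real.exp (x^2/2) / x^2) atTop atTop := by
    have hq : Tendsto (fun x : ℝ => x^2/2) atTop atTop :=
      (tendsto_pow_atTop (by norm_num)).atTop_div_const (by norm_num)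
    have hF : Tendsto (fun y : ℝ => Real.exp y / y) atTop atTop := by
      simpa using Real.tendsto_exp_div_pow_atTop 1
    have := (hF.comp hq).const_mul_atTop (show (0:ℝ) < 1/2 by norm_num)
    refine this.congr' ?_
    filter_upwards [eventually_gt_atTop (0:ℝ)] with x hx
    have hx2 : x^2 ≠ 0 := by positivity
    simp only [Function.comp_apply]; field_simp
  have h1' : Tendsto (fun x : ℝ => C * (x * Real.exp (-x^2/2))) atTop (nhds (C * 0)) :=
    h1.const_mul C
  rw [mul_zero] at h1'
  have h2' : Tendsto (fun x : ℝ => a * (Real.exp (x^2/2) / x^2)) atTop atTop :=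
    h2.const_mul_atTop ha
  have h3 : Tendsto (fun x : ℝ => -(a * (Real.exp (x^2/2) / x^2))) atTop atBot :=
    tendsto_neg_atTop_atBot.comp h2'
  simpa [sub_eq_add_neg] using h1'.add_atBot h3


def Wf (f : ℝ → ℂ) (x : ℝ) : ℂ := f x * phi1C x - deriv f x * phi0C x
def hq (f : ℝ → ℂ) (x : ℝ) : ℂ := f x / phi0C x

lemma key (f : ℝ → ℂ)
    (hdf : ∀ x ∈ Set.Ioi (0:ℝ), DifferentiableAt ℝ f x)
    (hdf' : ∀ x ∈ Set.Ioi (0:ℝ), DifferentiableAt ℝ (deriv f) x)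
    (hL2 : MemL2 f)
    (hode : ∀ x ∈ Set.Ioi (0:ℝ), deriv (deriv f) x = ((x:ℂ)^2-3) * f x) :
    ∀ x ∈ Set.Ioi (0:ℝ), f x = (f 1 / phi0C 1) * phi0C x := by
  have hW0 : ∀ x ∈ Set.Ioi (0:ℝ), HasDerivAt (Wf f) 0 x := by
    intro x hx
    have h1 : HasDerivAt f (deriv f x) x := (hdf x hx).hasDerivAt
    have h2 : HasDerivAt (deriv f) (deriv (deriv f) x) x := (hdf' x hx).hasDerivAt
    have := (h1.mul (hasDerivAt_phi1C x)).sub (h2.mul (hasDerivAt_phi0C x))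
    refine this.congr_deriv ?_
    rw [hode x hx]; ring
  have hWc : ∀ x ∈ Set.Ioi (0:ℝ), Wf f x = Wf f 1 := const_of_deriv_zero hW0
  have hh' : ∀ x ∈ Set.Ioi (0:ℝ), HasDerivAt (hq f) (-(Wf f 1) / (phi0C x)^2) x := by
    intro x hx
    have := ((hdf x hx).hasDerivAt).div (hasDerivAt_phi0C x) (phi0C_ne hx)
    refine this.congr_deriv ?_
    rw [← hWc x hx]
    unfold Wf
    ring
  have hW1 : Wf f 1 = 0 := by
    by_contra hWne
    set a : ℝ := Complex.normSq (Wf f 1) with ha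
    have hapos : 0 < a := Complex.normSq_pos.mpr hWne
    have hr' : ∀ x ∈ Set.Ioi (0:ℝ),
        HasDerivAt (fun y => ((starRingEnd ℂ) (Wf f 1) * hq f y).re)
          (-(a * (Real.exp (x^2) / x^2))) x := by
      intro x hx
      have hx0 : (0:ℝ) < x := hx
      have h1 : HasDerivAt (fun y => (starRingEnd ℂ) (Wf f 1) * hq f y)
          ((starRingEnd ℂ) (Wf f 1) * (-(Wf f 1) / (phi0C x)^2)) x := (hh' x hx).const_mul _
      have h2 := Complex.reCLM.hasFDerivAt.comp_hasDerivAt x h1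
      refine h2.congr_deriv ?_
      have he : Real.exp (-x^2/2) * Real.exp (-x^2/2) = Real.exp (-(x^2)) := by
        rw [← Real.exp_add]; ring_nf
      have hsqR : phi0R x ^ 2 = x^2 * Real.exp (-(x^2)) := by
        unfold phi0R; rw [← he]; ring
      have hsqr : (phi0C x)^2 = ((x^2 * Real.exp (-(x^2)) : ℝ) : ℂ) := by
        unfold phi0C; rw [← Complex.ofReal_pow, hsqR]
      rw [hsqr]
      have hnum : (starRingEnd ℂ) (Wf f 1) * (-(Wf f 1)) = -(a:ℂ) := by
        rw [mul_neg, mul_comm, Complex.mul_conj, ha]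
      have hcm : (starRingEnd ℂ) (Wf f 1) * (-(Wf f 1) / ((x^2 * Real.exp (-(x^2)) : ℝ) : ℂ))
          = ((-(a / (x^2 * Real.exp (-(x^2)))) : ℝ) : ℂ) := by
        rw [← mul_div_assoc, hnum]
        push_cast
        ring
      rw [hcm]
      simp only [Complex.reCLM_apply, Complex.ofReal_re]
      rw [Real.exp_neg]
      have hx2 : x^2 ≠ 0 := by positivity
      have hex : Real.exp (x^2) ≠ 0 := (Real.exp_pos _).ne'
      field_simp
    have hE' : ∀ x ∈ Set.Ioi (0:ℝ), HasDerivAt (fun y : ℝ => Real.exp (y^2) / y^3)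
        ((2*x*Real.exp (x^2) * x^3 - Real.exp (x^2)*(3*x^2))/(x^3)^2) x := by
      intro x hx
      have h1 : HasDerivAt (fun y : ℝ => Real.exp (y^2)) (2*x*Real.exp (x^2)) x := by
        have := ((hasDerivAt_pow 2 x)).exp
        convert this using 1; ring
      have h2 : HasDerivAt (fun y : ℝ => y^3) (3*x^2) x := by
        simpa using hasDerivAt_pow 3 x
      have hx0 : (0:ℝ) < x := hx
      exact h1.div h2 (by positivity)
    set g : ℝ → ℝ := fun y => ((starRingEnd ℂ) (Wf f 1) * hq f y).re
        + (a/2) * (Real.exp (y^2) / y^3) with hgdef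
    have hg' : ∀ x ∈ Set.Ioi (0:ℝ), HasDerivAt g
        (-(a * (Real.exp (x^2)/x^2))
          + (a/2) * ((2*x*Real.exp (x^2) * x^3 - Real.exp (x^2)*(3*x^2))/(x^3)^2)) x :=
      fun x hx => (hr' x hx).add ((hE' x hx).const_mul (a/2))
    have hanti : AntitoneOn g (Set.Ici (1:ℝ)) := by
      apply antitoneOn_of_deriv_nonpos (convex_Ici 1)
      · intro x hx
        exact ((hg' x (show (0:ℝ) < x from lt_of_lt_of_le one_pos hx)).differentiableAt).continuousAt.continuousWithinAt
      · intro x hx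
        rw [interior_Ici] at hx
        exact ((hg' x (show (0:ℝ) < x from lt_trans one_pos hx)).differentiableAt).differentiableWithinAt
      · intro x hx
        rw [interior_Ici] at hx
        have hx0 : (0:ℝ) < x := lt_trans one_pos hx
        rw [(hg' x hx0).deriv]
        have hval : -(a * (Real.exp (x^2)/x^2))
            + (a/2) * ((2*x*Real.exp (x^2) * x^3 - Real.exp (x^2)*(3*x^2))/(x^3)^2)
            = (-(3*a/2) * Real.exp (x^2)) / x^4 := by
          have hx4 : x ≠ 0 := hx0.ne'
          field_simp
          ring
        rw [hval]
        apply div_nonpos_of_nonpos_of_nonneg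
        · have := (Real.exp_pos (x^2)).le
          nlinarith
        · positivity
    have hub : ∀ x, 1 ≤ x → ((starRingEnd ℂ) (Wf f 1) * f x).re
        ≤ g 1 * (x * Real.exp (-x^2/2)) - (a/2) * (Real.exp (x^2/2)/x^2) := by
      intro x hx
      have hx0 : (0:ℝ) < x := lt_of_lt_of_le one_pos hx
      have hfx : f x = hq f x * phi0C x := by
        unfold hq
        field_simp [phi0C_ne hx0]
      have hre : ((starRingEnd ℂ) (Wf f 1) * f x).re
          = ((starRingEnd ℂ) (Wf f 1) * hq f x).re * phi0R x := by
        rw [hfx, ← mul_assoc]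
        unfold phi0C
        simp [Complex.mul_re]
      have hgb : ((starRingEnd ℂ) (Wf f 1) * hq f x).re
          ≤ g 1 - (a/2) * (Real.exp (x^2) / x^3) := by
        have hgx : ((starRingEnd ℂ) (Wf f 1) * hq f x).re + (a/2) * (Real.exp (x^2)/x^3) ≤ g 1 :=
          hanti self_mem_Ici hx hx
        linarith
      have hmul : (Real.exp (x^2) / x^3) * phi0R x = Real.exp (x^2/2)/x^2 := by
        unfold phi0R
        have hexp : Real.exp (x^2) * Real.exp (-x^2/2) = Real.exp (x^2/2) := by
          rw [← Real.exp_add]; ring_nf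
        have hx3 : x ≠ 0 := hx0.ne'
        rw [div_mul_eq_mul_div, ← mul_assoc, mul_comm (Real.exp _) x, mul_assoc, hexp]
        field_simp
      calc ((starRingEnd ℂ) (Wf f 1) * f x).re
          = ((starRingEnd ℂ) (Wf f 1) * hq f x).re * phi0R x := hre
        _ ≤ (g 1 - (a/2) * (Real.exp (x^2) / x^3)) * phi0R x :=
            mul_le_mul_of_nonneg_right hgb (phi0R_pos hx0).le
        _ = g 1 * (x * Real.exp (-x^2/2)) - (a/2) * ((Real.exp (x^2) / x^3) * phi0R x) := by
            unfold phi0R; ring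
        _ = g 1 * (x * Real.exp (-x^2/2)) - (a/2) * (Real.exp (x^2/2)/x^2) := by rw [hmul]
    have hBB := (tendsto_B (g 1) (a/2) (by positivity)).eventually
      (eventually_le_atBot (-(‖Wf f 1‖ + 1)))
    obtain ⟨M, hM⟩ := (hBB.and (eventually_ge_atTop (1:ℝ))).exists_forall_of_atTop
    refine not_memL2_of_ge_one f M ?_ hL2
    intro x hx
    obtain ⟨hB, h1x⟩ := hM x hx
    have hRe : ((starRingEnd ℂ) (Wf f 1) * f x).re ≤ -(‖Wf f 1‖ + 1) :=
      le_trans (hub x h1x) hB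
    by_contra hcon
    push_neg at hcon
    have habs : |((starRingEnd ℂ) (Wf f 1) * f x).re| ≤ ‖Wf f 1‖ * ‖f x‖ := by
      calc |((starRingEnd ℂ) (Wf f 1) * f x).re| ≤ ‖(starRingEnd ℂ) (Wf f 1) * f x‖ :=
            Complex.abs_re_le_norm _
        _ = ‖Wf f 1‖ * ‖f x‖ := by
            rw [norm_mul, Complex.norm_conj]
    have hnf : ‖f x‖ = ‖f x‖ := rfl
    have h0W : 0 ≤ ‖Wf f 1‖ := norm_nonneg _
    have h0f : 0 ≤ ‖f x‖ := norm_nonneg _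
    rw [hnf] at habs
    have h2' : ‖Wf f 1‖ + 1 ≤ |((starRingEnd ℂ) (Wf f 1) * f x).re| :=
      le_trans (by linarith) (neg_le_abs _)
    nlinarith [h2', habs, mul_le_mul_of_nonneg_left hcon.le h0W]
  -- now W f 1 = 0
  have hconstL : ∀ x ∈ Set.Ioi (0:ℝ), hq f x = hq f 1 :=
    const_of_deriv_zero (fun x hx => by simpa [hW1] using hh' x hx)
  intro x hx
  have hfx : f x = hq f x * phi0C x := by
    unfold hq
    field_simp [phi0C_ne (show (0:ℝ) < x from hx)]
  rw [hfx, hconstL x hx]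
  unfold hq
  ring

lemma deriv_eq_on_Ioi (f : ℝ → ℂ) (K : ℂ) (hfx : ∀ x ∈ Set.Ioi (0:ℝ), f x = K * phi0C x) :
    ∀ x ∈ Set.Ioi (0:ℝ), deriv f x = K * phi1C x := by
  intro x hx
  have hev : f =ᶠ[nhds x] fun y => K * phi0C y :=
    eventually_of_mem (isOpen_Ioi.mem_nhds hx) hfx
  rw [hev.deriv_eq]
  exact ((hasDerivAt_phi0C x).const_mul K).deriv

lemma deriv2_eq_on_Ioi (f : ℝ → ℂ) (K : ℂ) (hfx : ∀ x ∈ Set.Ioi (0:ℝ), f x = K * phi0C x) :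
    ∀ x ∈ Set.Ioi (0:ℝ), deriv (deriv f) x = K * (((x:ℂ)^2-3) * phi0C x) := by
  intro x hx
  have hev : deriv f =ᶠ[nhds x] fun y => K * phi1C y :=
    eventually_of_mem (isOpen_Ioi.mem_nhds hx) (deriv_eq_on_Ioi f K hfx)
  rw [hev.deriv_eq]
  exact ((hasDerivAt_phi1C x).const_mul K).deriv

lemma deriv_at_zero (f : ℝ → ℂ) (hc : ContinuousOn (deriv f) (Set.Ici (0:ℝ))) (K : ℂ)
    (hfx : ∀ x ∈ Set.Ioi (0:ℝ), f x = K * phi0C x) : deriv f 0 = K := by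
  have hd := deriv_eq_on_Ioi f K hfx
  have h1 : Tendsto (deriv f) (nhdsWithin 0 (Set.Ioi (0:ℝ))) (nhds (deriv f 0)) :=
    (hc 0 self_mem_Ici).mono Set.Ioi_subset_Ici_self
  have h2 : Tendsto (fun y => K * phi1C y) (nhdsWithin 0 (Set.Ioi (0:ℝ)))
      (nhds (K * phi1C 0)) :=
    (((hasDerivAt_phi1C 0).const_mul K).differentiableAt.continuousAt).continuousWithinAt
  have h3 : Tendsto (deriv f) (nhdsWithin 0 (Set.Ioi (0:ℝ))) (nhds (K * phi1C 0)) :=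
    h2.congr' (eventually_nhdsWithin_of_forall (fun x hx => (hd x hx).symm))
  have h4 := tendsto_nhds_unique h1 h3
  rw [h4]
  have : phi1C 0 = 1 := by
    unfold phi1C phi1R
    norm_num
  rw [this, mul_one]

/-- the kernel of the unperturbed operator `T⁰₁` (Kirchhoff condition, `α = 0`)
consists exactly of the tuples `(c_j φ₀')_j` with `∑ c_j = 0`, where `φ₀'(x) = -x e^{-x²/2}`. -/
theorem T01_kernel (N : ℕ) (hN : 2 ≤ N) (V : Fin N → ℝ → ℂ) (hdom : domDelta N 0 V) :
    (∀ j : Fin N, ∀ x ∈ Set.Ioi (0:ℝ), Tlin N 0 0 3 V j x = 0) ↔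
    (∃ c : Fin N → ℂ, (∑ j, c j) = 0 ∧
      ∀ j : Fin N, ∀ x ∈ Set.Ioi (0:ℝ),
        V j x = c j * ((-x * Real.exp (-x^2/2) : ℝ) : ℂ)) := by
  obtain ⟨hW2, hval, hkir⟩ := hdom
  have hpot : ∀ (j : Fin N) (x : ℝ), ((pot N 0 0 3 j x : ℝ) : ℂ) = (x:ℂ)^2 - 3 := by
    intro j x
    unfold pot
    rw [if_neg (Nat.not_lt_zero _)]
    push_cast
    norm_num
  constructor
  · intro hT
    have hode : ∀ j, ∀ x ∈ Set.Ioi (0:ℝ),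
        deriv (deriv (V j)) x = ((x:ℂ)^2-3) * V j x := by
      intro j x hx
      have h := hT j x hx
      unfold Tlin at h
      rw [hpot] at h
      linear_combination -h
    have hVK : ∀ j, ∀ x ∈ Set.Ioi (0:ℝ), V j x = (V j 1 / phi0C 1) * phi0C x := by
      intro j
      exact key (V j) (fun x hx => (hW2 j).1.1.2.1 x hx)
        (fun x hx => (hW2 j).1.2.2.1 x hx) ((hW2 j).1.1.2.2.1) (hode j)
    set K : Fin N → ℂ := fun j => V j 1 / phi0C 1 with hK
    have hd0 : ∀ j, deriv (V j) 0 = K j := fun j =>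
      deriv_at_zero (V j) ((hW2 j).1.2.1) (K j) (hVK j)
    have hsum : ∑ j, deriv (V j) 0 = 0 := by
      have h := hkir ⟨0, by omega⟩
      simpa using h
    have hK0 : ∑ j, K j = 0 := by
      rw [← hsum]
      exact Finset.sum_congr rfl fun j _ => (hd0 j).symm
    refine ⟨fun j => -(K j), by simp [Finset.sum_neg_distrib, hK0], ?_⟩
    intro j x hx
    simp only [hK]
    rw [hVK j x hx]
    unfold phi0C phi0R
    push_cast
    ring
  · rintro ⟨c, hc0, hcV⟩ j x hx
    have hVf : ∀ y ∈ Set.Ioi (0:ℝ), V j y = (-(c j)) * phi0C y := by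
      intro y hy
      rw [hcV j y hy]
      unfold phi0C phi0R
      push_cast
      ring
    have h2 := deriv2_eq_on_Ioi (V j) (-(c j)) hVf x hx
    unfold Tlin
    rw [hpot, h2, hVf x hx]
    ring
end
end
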